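/- arXiv:0909.1352 — 3 statements merged into one kernel-verified Lean document; each statement's English description precedes it below -/
import Mathlib

section
/- Let X be a standard normal random variable. Then there is a finite constant c_G such that for all extended reals −∞ ≤ a < b ≤ ∞, E|X∧b∨a − E[X∧b∨a]| ≤ c_G · P(a < X < b), where X∧b∨a denotes min(max(X,a),b) (the truncation of X to [a,b]). -/
open MeasureTheory ProbabilityTheory Real Set Filter
open scoped ENNReal NNReal

set_option maxHeartbeats 1000000

/-- Truncation `x ∧ b ∨ a` of a real number `x` to the (extended-real) interval `[a, b]`. -/
noncomputable def truncE (x : ℝ) (a b : EReal) : ℝ :=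
  (min (max (x : EReal) a) b).toReal

section Aux

lemma exp_int_Ioi {t : ℝ} (ht0 : 0 < t) (c : ℝ) :
    IntegrableOn (fun x => Real.exp (-(t*x))) (Ioi c) volume := by
  have := exp_neg_integrableOn_Ioi c ht0
  simpa [mul_comm] using this

lemma exp_val_Ioi {t : ℝ} (ht0 : 0 < t) (c : ℝ) :
    ∫ x in Ioi c, Real.exp (-(t*x)) = Real.exp (-(t*c)) / t := by
  have hd : ∀ x ∈ Ioi c, HasDerivAt (fun x => -Real.exp (-(t*x)) / t) (Real.exp (-(t*x))) x := by
    intro x _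
    have h1 : HasDerivAt (fun x => -(t*x)) (-t) x := by
      have h0 := ((hasDerivAt_id x).const_mul t).neg
      simp only [mul_one] at h0
      exact h0
    have h2 := (h1.exp).neg.div_const t
    refine h2.congr_deriv ?_
    field_simp
  have hcont : ContinuousWithinAt (fun x => -Real.exp (-(t*x)) / t) (Ici c) c := by
    apply Continuous.continuousWithinAt
    continuity
  have htend : Filter.Tendsto (fun x => -Real.exp (-(t*x)) / t) Filter.atTop (nhds 0) := by
    rw [show (0:ℝ) = -0/t by simp]
    apply Filter.Tendsto.div_const
    apply Filter.Tendsto.neg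
    apply Real.tendsto_exp_atBot.comp
    exact tendsto_neg_atTop_atBot.comp (tendsto_id.const_mul_atTop ht0)
  have := integral_Ioi_of_hasDerivAt_of_tendsto hcont hd (exp_int_Ioi ht0 c) htend
  rw [this]; field_simp; ring

lemma SN_apply (s : Set ℝ) : gaussianReal 0 1 s = ∫⁻ x in s, gaussianPDF 0 1 x :=
  gaussianReal_apply 0 one_ne_zero s

lemma pdf_eq (x : ℝ) : gaussianPDFReal 0 1 x = (Real.sqrt (2*π))⁻¹ * Real.exp (-x^2/2) := by
  simp [gaussianPDFReal_def]

lemma tail_ge_one {t : ℝ} (ht : 1 ≤ t) :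
    gaussianReal 0 1 (Ici t) ≤ ENNReal.ofReal (Real.exp (-t^2/2)) := by
  have ht0 : 0 < t := lt_of_lt_of_le one_pos ht
  rw [SN_apply]
  set C : ℝ := (Real.sqrt (2*π))⁻¹ * Real.exp (t^2/2) with hC
  have hC0 : 0 ≤ C := by positivity
  have hpt : ∀ x ∈ Ici t, gaussianPDF 0 1 x ≤
      ENNReal.ofReal (C * Real.exp (-(t*x))) := by
    intro x hx
    rw [gaussianPDF_def]
    apply ENNReal.ofReal_le_ofReal
    rw [pdf_eq, hC, mul_assoc]
    have h1 : Real.exp (-x^2/2) ≤ Real.exp (t^2/2) * Real.exp (-(t*x)) := by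
      rw [← Real.exp_add]
      apply Real.exp_le_exp.mpr
      nlinarith [sq_nonneg (x - t)]
    have h2 : (0:ℝ) ≤ (Real.sqrt (2*π))⁻¹ := by positivity
    nlinarith [h1, h2]
  have hmeas : Measurable fun x => ENNReal.ofReal (C * Real.exp (-(t*x))) :=
    (measurable_const.mul ((measurable_const.mul measurable_id).neg.exp)).ennreal_ofReal
  have hIciIoi : (∫⁻ x in Ici t, ENNReal.ofReal (C * Real.exp (-(t*x))))
      = ∫⁻ x in Ioi t, ENNReal.ofReal (C * Real.exp (-(t*x))) := by
    rw [MeasureTheory.restrict_Ioi_eq_restrict_Ici]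
  calc ∫⁻ x in Ici t, gaussianPDF 0 1 x
      ≤ ∫⁻ x in Ici t, ENNReal.ofReal (C * Real.exp (-(t*x))) :=
        setLIntegral_mono hmeas hpt
    _ = ENNReal.ofReal (∫ x in Ioi t, C * Real.exp (-(t*x))) := by
        rw [hIciIoi, ← ofReal_integral_eq_lintegral_ofReal ((exp_int_Ioi ht0 t).const_mul C)]
        exact Filter.Eventually.of_forall fun x => by positivity
    _ ≤ ENNReal.ofReal (Real.exp (-t^2/2)) := by
        apply ENNReal.ofReal_le_ofReal
        rw [MeasureTheory.integral_const_mul, exp_val_Ioi ht0 t, hC]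
        have h2pi : (1:ℝ) ≤ Real.sqrt (2*π) := by
          rw [show (1:ℝ) = Real.sqrt 1 by simp]
          apply Real.sqrt_le_sqrt
          nlinarith [Real.pi_gt_three]
        have hs : (Real.sqrt (2*π))⁻¹ ≤ 1 := by
          rw [inv_le_one_iff₀]; right; exact h2pi
        have ht1 : (t:ℝ)⁻¹ ≤ 1 := by rw [inv_le_one_iff₀]; right; exact ht
        have key : (Real.sqrt (2*π))⁻¹ * Real.exp (t^2/2) * (Real.exp (-(t*t)) / t)
            = (Real.sqrt (2*π))⁻¹ * t⁻¹ * Real.exp (t^2/2 + -(t*t)) := by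
          rw [Real.exp_add]; ring
        rw [key, show t^2/2 + -(t*t) = -t^2/2 by ring]
        have h3 : (Real.sqrt (2*π))⁻¹ * t⁻¹ ≤ 1 := by
          have h4 : (0:ℝ) ≤ t⁻¹ := by positivity
          nlinarith
        nlinarith [Real.exp_pos (-t^2/2)]

lemma gauss_symm (t : ℝ) : gaussianReal 0 1 (Iio t) = gaussianReal 0 1 (Ioi (-t)) := by
  have h : (gaussianReal 0 1).map ((-1 : ℝ) * ·) = gaussianReal 0 1 := by
    rw [gaussianReal_map_const_mul (-1 : ℝ)]
    norm_num
  conv_lhs => rw [← h]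
  rw [Measure.map_apply (measurable_const_mul _) measurableSet_Iio]
  congr 1
  ext x
  simp only [mem_preimage, mem_Iio, mem_Ioi]
  constructor <;> intro <;> linarith

lemma half_le_exp {t : ℝ} (h : t^2 ≤ 1) : (1:ℝ) ≤ 2 * Real.exp (-t^2/2) := by
  nlinarith [Real.add_one_le_exp (-t^2/2)]

lemma nu_bound (t : ℝ) :
    (if 0 < t then gaussianReal 0 1 (Ici t) else gaussianReal 0 1 (Iio t))
      ≤ ENNReal.ofReal (2 * Real.exp (-t^2/2)) := by
  have hle1 : ∀ s : Set ℝ, gaussianReal 0 1 s ≤ 1 := fun s => prob_le_one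
  have hdouble : ∀ u : ℝ, ENNReal.ofReal (Real.exp (-u^2/2)) ≤ ENNReal.ofReal (2 * Real.exp (-u^2/2)) := by
    intro u
    apply ENNReal.ofReal_le_ofReal
    nlinarith [Real.exp_pos (-u^2/2)]
  split_ifs with h
  · rcases le_or_gt 1 t with h1 | h1
    · exact (tail_ge_one h1).trans (hdouble t)
    · refine (hle1 _).trans ?_
      rw [show (1 : ℝ≥0∞) = ENNReal.ofReal 1 by simp]
      exact ENNReal.ofReal_le_ofReal (half_le_exp (by nlinarith))
  · rcases le_or_gt 1 (-t) with h1 | h1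
    · rw [gauss_symm]
      refine le_trans (measure_mono Ioi_subset_Ici_self) ?_
      refine (tail_ge_one h1).trans ?_
      rw [show (-t)^2 = t^2 by ring]
      exact hdouble t
    · refine (hle1 _).trans ?_
      rw [show (1 : ℝ≥0∞) = ENNReal.ofReal 1 by simp]
      push_neg at h
      exact ENNReal.ofReal_le_ofReal (half_le_exp (by nlinarith))

lemma mem_uIoc_iff (x t : ℝ) : t ∈ Set.uIoc 0 x ↔ (min 0 x < t ∧ t ≤ max 0 x) := Set.mem_Ioc

lemma abs_int : Integrable (fun x => |x|) (gaussianReal 0 1) := by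
  rw [gaussianReal_of_var_ne_zero 0 one_ne_zero]
  rw [integrable_withDensity_iff (measurable_gaussianPDF 0 1)
    (Filter.Eventually.of_forall fun x => ENNReal.ofReal_lt_top)]
  have h0 : Integrable (fun x : ℝ => x * Real.exp (-(1/2) * x^2)) volume :=
    integrable_mul_exp_neg_mul_sq (by norm_num)
  have h1 := h0.abs.const_mul ((Real.sqrt (2*π))⁻¹)
  apply h1.congr
  filter_upwards with x
  rw [gaussianPDF_def, ENNReal.toReal_ofReal (gaussianPDFReal_nonneg 0 1 x), pdf_eq,
    abs_mul, abs_of_pos (Real.exp_pos _), show -(1/2) * x^2 = -x^2/2 by ring]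
  ring

lemma core (g : ℝ → ℝ) (S : Set ℝ) (hS : MeasurableSet S) (hg : Measurable g)
    (hpt : ∀ x, |g x - g 0| ≤ (volume (S ∩ Set.uIoc 0 x)).toReal) :
    ∫ x, |g x - ∫ y, g y ∂(gaussianReal 0 1)| ∂(gaussianReal 0 1)
      ≤ (4 * Real.sqrt (2*π)) * ((gaussianReal 0 1) S).toReal := by
  set μ := gaussianReal 0 1 with hμ
  -- Lipschitz-type bound
  have hlip : ∀ x, |g x - g 0| ≤ |x| := by
    intro x
    refine (hpt x).trans ?_
    refine ENNReal.toReal_le_of_le_ofReal (abs_nonneg x) ?_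
    refine le_trans (measure_mono inter_subset_right) ?_
    rw [Set.uIoc, Real.volume_Ioc]
    apply ENNReal.ofReal_le_ofReal
    rw [max_sub_min_eq_abs]
    simp [abs_sub_comm]
  -- integrability
  have hgint : Integrable g μ := by
    refine Integrable.mono' ((abs_int.add (integrable_const |g 0|))) hg.aestronglyMeasurable ?_
    filter_upwards with x
    have := hlip x
    rw [Real.norm_eq_abs]
    have h2 : |g x| ≤ |g x - g 0| + |g 0| := by
      calc |g x| = |(g x - g 0) + g 0| := by ring_nf
        _ ≤ |g x - g 0| + |g 0| := abs_add_le _ _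
    simpa using h2.trans (by linarith)
  set M : ℝ := ∫ y, g y ∂μ with hM
  have hgsubint : Integrable (fun x => |g x - g 0|) μ := (hgint.sub (integrable_const _)).abs
  -- reduce to centered at g 0
  have hcenter : ∫ x, |g x - M| ∂μ ≤ 2 * ∫ x, |g x - g 0| ∂μ := by
    have hconst : |g 0 - M| ≤ ∫ x, |g x - g 0| ∂μ := by
      have h1 : g 0 - M = ∫ x, (g 0 - g x) ∂μ := by
        rw [integral_sub (integrable_const _) hgint, integral_const, probReal_univ]
        simp [hM]
      rw [h1]
      have hn := norm_integral_le_integral_norm (μ := μ) (f := fun x => g 0 - g x)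
      simp only [Real.norm_eq_abs] at hn
      refine hn.trans (le_of_eq ?_)
      congr 1
      funext x
      rw [abs_sub_comm]
    have h2 : ∀ x, |g x - M| ≤ |g x - g 0| + |g 0 - M| := fun x => by
      calc |g x - M| = |(g x - g 0) + (g 0 - M)| := by norm_num
        _ ≤ _ := abs_add_le _ _
    calc ∫ x, |g x - M| ∂μ ≤ ∫ x, (|g x - g 0| + |g 0 - M|) ∂μ := by
          apply integral_mono (hgint.sub (integrable_const _)).abs
            (hgsubint.add (integrable_const _)) h2
      _ = (∫ x, |g x - g 0| ∂μ) + |g 0 - M| := by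
          rw [integral_add hgsubint (integrable_const _), integral_const, probReal_univ]
          simp
      _ ≤ 2 * ∫ x, |g x - g 0| ∂μ := by linarith
  -- lintegral bound via Fubini
  set T : Set (ℝ × ℝ) := {p | p.2 ∈ S ∩ Set.uIoc 0 p.1} with hT_def
  have hT : MeasurableSet T := by
    have h1 : T = (Prod.snd ⁻¹' S) ∩ ({p : ℝ × ℝ | min 0 p.1 < p.2} ∩ {p : ℝ × ℝ | p.2 ≤ max 0 p.1}) := by
      ext p
      simp only [hT_def, Set.mem_inter_iff, Set.mem_setOf_eq, Set.mem_preimage, mem_uIoc_iff]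
      try tauto
    rw [h1]
    exact (hS.preimage measurable_snd).inter
      ((measurableSet_lt (measurable_const.min measurable_fst) measurable_snd).inter
       (measurableSet_le measurable_snd (measurable_const.max measurable_fst)))
  have key : ∫⁻ x, volume (S ∩ Set.uIoc 0 x) ∂μ
      ≤ ENNReal.ofReal (2 * Real.sqrt (2*π)) * μ S := by
    have h1 : ∀ x, volume (S ∩ Set.uIoc 0 x) = ∫⁻ t, T.indicator 1 (x, t) ∂volume := by
      intro x
      rw [← lintegral_indicator_one (hS.inter measurableSet_uIoc)]
      congr 1
    have h2 : ∫⁻ x, ∫⁻ t, T.indicator 1 (x, t) ∂volume ∂μ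
        = ∫⁻ t, ∫⁻ x, T.indicator 1 (x, t) ∂μ ∂volume :=
      lintegral_lintegral_swap ((measurable_const.indicator hT).aemeasurable)
    have h3 : ∀ t, ∫⁻ x, T.indicator 1 (x, t) ∂μ
        = S.indicator (fun t => if 0 < t then μ (Ici t) else μ (Iio t)) t := by
      intro t
      have hsec : (fun x => T.indicator (1 : ℝ × ℝ → ℝ≥0∞) (x, t))
          = ({x : ℝ | (x, t) ∈ T}).indicator 1 := by
        rfl
      have hms : MeasurableSet {x : ℝ | (x, t) ∈ T} := hT.preimage measurable_prodMk_right
      rw [hsec, lintegral_indicator_one hms]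
      by_cases hts : t ∈ S
      · rw [Set.indicator_of_mem hts]
        by_cases ht0 : 0 < t
        · rw [if_pos ht0]
          congr 1
          ext x
          simp only [hT_def, Set.mem_setOf_eq, Set.mem_inter_iff, mem_uIoc_iff, Set.mem_Ici]
          constructor
          · rintro ⟨-, -, h⟩
            rcases le_max_iff.mp h with h | h
            · linarith
            · exact h
          · intro h
            exact ⟨hts, lt_of_le_of_lt (min_le_left 0 x) ht0, le_max_of_le_right h⟩
        · rw [if_neg ht0]
          push_neg at ht0
          congr 1
          ext x
          simp only [hT_def, Set.mem_setOf_eq, Set.mem_inter_iff, mem_uIoc_iff, Set.mem_Iio]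
          constructor
          · rintro ⟨-, h, -⟩
            rcases min_lt_iff.mp h with h | h
            · linarith
            · exact h
          · intro h
            refine ⟨hts, min_lt_of_right_lt h, le_max_of_le_left ht0⟩
      · rw [Set.indicator_of_notMem hts]
        convert measure_empty (μ := μ)
        ext x
        simp only [hT_def, Set.mem_setOf_eq, Set.mem_inter_iff]
        tauto
    calc ∫⁻ x, volume (S ∩ Set.uIoc 0 x) ∂μ
        = ∫⁻ t, ∫⁻ x, T.indicator 1 (x, t) ∂μ ∂volume := by
          rw [← h2]; congr 1; funext x; exact h1 x
      _ = ∫⁻ t in S, (if 0 < t then μ (Ici t) else μ (Iio t)) ∂volume := by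
          simp_rw [h3]
          rw [lintegral_indicator hS]
      _ ≤ ∫⁻ t in S, ENNReal.ofReal (2 * Real.sqrt (2*π)) * gaussianPDF 0 1 t ∂volume := by
          apply lintegral_mono
          intro t
          refine (nu_bound t).trans (le_of_eq ?_)
          simp only [gaussianPDF_def]
          rw [pdf_eq, ← ENNReal.ofReal_mul (by positivity)]
          congr 1
          have hsq : Real.sqrt (2*π) ≠ 0 := by positivity
          field_simp
      _ = ENNReal.ofReal (2 * Real.sqrt (2*π)) * μ S := by
          rw [lintegral_const_mul _ (measurable_gaussianPDF 0 1), ← SN_apply]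
  -- combine
  have hstep : ∫ x, |g x - g 0| ∂μ ≤ (2 * Real.sqrt (2*π)) * (μ S).toReal := by
    rw [integral_eq_lintegral_of_nonneg_ae (f := fun x => |g x - g 0|) (Filter.Eventually.of_forall fun x => abs_nonneg _)
      (hg.sub measurable_const).abs.aestronglyMeasurable]
    have h4 : ∫⁻ x, ENNReal.ofReal |g x - g 0| ∂μ ≤ ENNReal.ofReal (2 * Real.sqrt (2*π)) * μ S := by
      refine le_trans (lintegral_mono fun x => ?_) key
      exact ENNReal.ofReal_le_of_le_toReal (hpt x)
    have h5 : ENNReal.ofReal (2 * Real.sqrt (2*π)) * μ S ≠ ⊤ :=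
      ENNReal.mul_ne_top ENNReal.ofReal_ne_top (measure_ne_top μ S)
    refine le_trans (ENNReal.toReal_mono h5 h4) (le_of_eq ?_)
    rw [ENNReal.toReal_mul, ENNReal.toReal_ofReal (by positivity)]
  calc ∫ x, |g x - M| ∂μ ≤ 2 * ∫ x, |g x - g 0| ∂μ := hcenter
    _ ≤ 2 * ((2 * Real.sqrt (2*π)) * (μ S).toReal) := by linarith [hstep]
    _ = (4 * Real.sqrt (2*π)) * (μ S).toReal := by ring

lemma truncE_bot_top (x : ℝ) : truncE x ⊥ ⊤ = x := by
  simp [truncE]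

lemma truncE_bot_coe (x b : ℝ) : truncE x ⊥ (b : EReal) = min x b := by
  rw [truncE]
  rw [show ((x:EReal) ⊔ (⊥:EReal)) = (x:EReal) by simp]
  rw [← EReal.coe_strictMono.monotone.map_min]
  simp

lemma truncE_coe_top (x a : ℝ) : truncE x (a : EReal) ⊤ = max x a := by
  rw [truncE]
  rw [show ((x:EReal) ⊔ (a:EReal)) ⊓ (⊤:EReal) = ((x:EReal) ⊔ (a:EReal)) by simp]
  rw [← EReal.coe_strictMono.monotone.map_max]
  simp

lemma truncE_coe_coe (x a b : ℝ) : truncE x (a : EReal) (b : EReal) = min (max x a) b := by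
  rw [truncE, ← EReal.coe_strictMono.monotone.map_max, ← EReal.coe_strictMono.monotone.map_min]
  simp

lemma S_bot_top : {t : ℝ | (⊥ : EReal) < (t : EReal) ∧ (t : EReal) < (⊤ : EReal)} = Set.univ := by
  ext t; simp [EReal.bot_lt_coe, EReal.coe_lt_top]

lemma S_bot_coe (b : ℝ) : {t : ℝ | (⊥ : EReal) < (t : EReal) ∧ (t : EReal) < (b : EReal)} = Set.Iio b := by
  ext t; simp [EReal.bot_lt_coe, EReal.coe_lt_coe_iff]

lemma S_coe_top (a : ℝ) : {t : ℝ | (a : EReal) < (t : EReal) ∧ (t : EReal) < (⊤ : EReal)} = Set.Ioi a := by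
  ext t; simp [EReal.coe_lt_top, EReal.coe_lt_coe_iff]

lemma S_coe_coe (a b : ℝ) : {t : ℝ | (a : EReal) < (t : EReal) ∧ (t : EReal) < (b : EReal)} = Set.Ioo a b := by
  ext t; simp [EReal.coe_lt_coe_iff, Set.mem_Ioo]



lemma vol_helper {S : Set ℝ} {x lo hi : ℝ} (hsub : Set.Ioo lo hi ⊆ S ∩ Set.uIoc 0 x) :
    max (hi - lo) 0 ≤ (volume (S ∩ Set.uIoc 0 x)).toReal := by
  have hfin : volume (S ∩ Set.uIoc 0 x) ≠ ⊤ := by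
    refine ne_top_of_le_ne_top ?_ (measure_mono inter_subset_right)
    rw [Set.uIoc, Real.volume_Ioc]
    exact ENNReal.ofReal_ne_top
  have h0 : ENNReal.ofReal (hi - lo) ≤ volume (S ∩ Set.uIoc 0 x) := by
    rw [← Real.volume_Ioo]
    exact measure_mono hsub
  have h1 := ENNReal.toReal_mono hfin h0
  rw [ENNReal.toReal_ofReal'] at h1
  exact h1

lemma sub_mem_helper {S : Set ℝ} {x lo hi : ℝ}
    (hS : ∀ t, lo < t → t < hi → t ∈ S)
    (hlo : min 0 x ≤ lo) (hhi : hi ≤ max 0 x) (hlo0 : 0 ≤ lo ∨ hi ≤ 0) :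
    Set.Ioo lo hi ⊆ S ∩ Set.uIoc 0 x := by
  intro t ht
  obtain ⟨h1, h2⟩ := ht
  refine ⟨hS t h1 h2, (mem_uIoc_iff x t).mpr ⟨?_, ?_⟩⟩
  · rcases hlo0 with h | h
    · exact lt_of_le_of_lt (le_trans (min_le_left 0 x) h) h1
    · exact lt_of_le_of_lt hlo h1
  · rcases hlo0 with h | h
    · exact le_trans (le_of_lt h2) hhi
    · exact le_trans (le_of_lt h2) (le_trans h (le_max_left 0 x))

lemma hpt_cc {a b : ℝ} (hab : a < b) (x : ℝ) :
    |min (max x a) b - min (max 0 a) b| ≤ (volume (Set.Ioo a b ∩ Set.uIoc 0 x)).toReal := by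
  rcases le_or_gt 0 x with hx | hx
  · refine le_trans ?_ (vol_helper (lo := max a 0) (hi := min b x)
      (sub_mem_helper (fun t h1 h2 => ⟨lt_of_le_of_lt (le_max_left a 0) h1, lt_of_lt_of_le h2 (min_le_left b x)⟩)
        (le_trans (min_le_left 0 x) (le_max_right a 0))
        (le_trans (min_le_right b x) (le_max_right 0 x))
        (Or.inl (le_max_right a 0))))
    rw [abs_le]
    constructor <;> (simp only [min_def, max_def]; split_ifs <;> linarith)
  · refine le_trans ?_ (vol_helper (lo := max a x) (hi := min b 0)
      (sub_mem_helper (fun t h1 h2 => ⟨lt_of_le_of_lt (le_max_left a x) h1, lt_of_lt_of_le h2 (min_le_left b 0)⟩)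
        (le_trans (min_le_right 0 x) (le_max_right a x))
        (le_trans (min_le_right b 0) (le_max_left 0 x))
        (Or.inr (min_le_right b 0))))
    rw [abs_le]
    constructor <;> (simp only [min_def, max_def]; split_ifs <;> linarith)

lemma hpt_bc {b : ℝ} (x : ℝ) :
    |min x b - min 0 b| ≤ (volume (Set.Iio b ∩ Set.uIoc 0 x)).toReal := by
  rcases le_or_gt 0 x with hx | hx
  · refine le_trans ?_ (vol_helper (lo := 0) (hi := min b x)
      (sub_mem_helper (fun t h1 h2 => lt_of_lt_of_le h2 (min_le_left b x))
        (min_le_left 0 x) (le_trans (min_le_right b x) (le_max_right 0 x)) (Or.inl le_rfl)))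
    rw [abs_le]
    constructor <;> (simp only [min_def, max_def]; split_ifs <;> linarith)
  · refine le_trans ?_ (vol_helper (lo := x) (hi := min b 0)
      (sub_mem_helper (fun t h1 h2 => lt_of_lt_of_le h2 (min_le_left b 0))
        (min_le_right 0 x) (le_trans (min_le_right b 0) (le_max_left 0 x)) (Or.inr (min_le_right b 0))))
    rw [abs_le]
    constructor <;> (simp only [min_def, max_def]; split_ifs <;> linarith)

lemma hpt_ct {a : ℝ} (x : ℝ) :
    |max x a - max 0 a| ≤ (volume (Set.Ioi a ∩ Set.uIoc 0 x)).toReal := by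
  rcases le_or_gt 0 x with hx | hx
  · refine le_trans ?_ (vol_helper (lo := max a 0) (hi := x)
      (sub_mem_helper (fun t h1 h2 => lt_of_le_of_lt (le_max_left a 0) h1)
        (le_trans (min_le_left 0 x) (le_max_right a 0)) (le_max_right 0 x) (Or.inl (le_max_right a 0))))
    rw [abs_le]
    constructor <;> (simp only [min_def, max_def]; split_ifs <;> linarith)
  · refine le_trans ?_ (vol_helper (lo := max a x) (hi := 0)
      (sub_mem_helper (fun t h1 h2 => lt_of_le_of_lt (le_max_left a x) h1)
        (le_trans (min_le_right 0 x) (le_max_right a x)) (le_max_left 0 x) (Or.inr le_rfl)))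
    rw [abs_le]
    constructor <;> (simp only [min_def, max_def]; split_ifs <;> linarith)

lemma hpt_bt (x : ℝ) :
    |x - 0| ≤ (volume ((Set.univ : Set ℝ) ∩ Set.uIoc 0 x)).toReal := by
  rcases le_or_gt 0 x with hx | hx
  · refine le_trans ?_ (vol_helper (lo := 0) (hi := x)
      (sub_mem_helper (fun t _ _ => Set.mem_univ t) (min_le_left 0 x) (le_max_right 0 x) (Or.inl le_rfl)))
    rw [sub_zero, abs_of_nonneg hx]
    simp
  · refine le_trans ?_ (vol_helper (lo := x) (hi := 0)
      (sub_mem_helper (fun t _ _ => Set.mem_univ t) (min_le_right 0 x) (le_max_left 0 x) (Or.inr le_rfl)))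
    rw [sub_zero, abs_of_neg hx]
    simp

lemma main_wrapper {Ω : Type*} [MeasurableSpace Ω] (P : Measure Ω) [IsProbabilityMeasure P]
    (X : Ω → ℝ) (hX : Measurable X) (hdist : P.map X = gaussianReal 0 1) (a b : EReal)
    (hS : MeasurableSet {t : ℝ | a < (t : EReal) ∧ (t : EReal) < b})
    (hg : Measurable (fun x => truncE x a b))
    (hpt : ∀ x, |truncE x a b - truncE 0 a b|
      ≤ (volume ({t : ℝ | a < (t : EReal) ∧ (t : EReal) < b} ∩ Set.uIoc 0 x)).toReal) :
    ∫ ω, |truncE (X ω) a b - ∫ ω', truncE (X ω') a b ∂P| ∂P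
      ≤ (4 * Real.sqrt (2*π)) * (P {ω | a < (X ω : EReal) ∧ (X ω : EReal) < b}).toReal := by
  have hmap : ∀ (f : ℝ → ℝ), Measurable f → ∫ ω, f (X ω) ∂P = ∫ x, f x ∂(gaussianReal 0 1) := by
    intro f hf
    rw [← hdist, integral_map hX.aemeasurable hf.aestronglyMeasurable]
  have hM : ∫ ω', truncE (X ω') a b ∂P = ∫ y, truncE y a b ∂(gaussianReal 0 1) := hmap _ hg
  have hPS : P {ω | a < (X ω : EReal) ∧ (X ω : EReal) < b}
      = (gaussianReal 0 1) {t : ℝ | a < (t : EReal) ∧ (t : EReal) < b} := by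
    rw [← hdist, Measure.map_apply hX hS]
    rfl
  rw [hM, hPS,
    hmap (fun x => |truncE x a b - ∫ y, truncE y a b ∂(gaussianReal 0 1)|) ((hg.sub measurable_const).abs)]
  exact core (fun x => truncE x a b) _ hS hg hpt

end Aux

theorem gaussian_truncation_L1_concentration
    {Ω : Type*} [MeasurableSpace Ω] (P : Measure Ω) [IsProbabilityMeasure P]
    (X : Ω → ℝ) (hX : Measurable X) (hdist : P.map X = gaussianReal 0 1) :
    ∃ cG : ℝ, ∀ a b : EReal, a < b →
      ∫ ω, |truncE (X ω) a b - ∫ ω', truncE (X ω') a b ∂P| ∂P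
        ≤ cG * (P {ω | a < (X ω : EReal) ∧ (X ω : EReal) < b}).toReal := by
  refine ⟨4 * Real.sqrt (2 * Real.pi), fun a b hab => ?_⟩
  induction a using EReal.rec with
  | bot =>
    induction b using EReal.rec with
    | bot => exact absurd hab (lt_irrefl _)
    | coe b =>
      refine main_wrapper P X hX hdist _ _ ?_ ?_ ?_
      · rw [S_bot_coe]; exact measurableSet_Iio
      · simp only [truncE_bot_coe]
        exact measurable_id.min measurable_const
      · intro x
        rw [S_bot_coe]
        simp only [truncE_bot_coe]
        exact hpt_bc x
    | top =>
      refine main_wrapper P X hX hdist _ _ ?_ ?_ ?_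
      · rw [S_bot_top]; exact MeasurableSet.univ
      · simp only [truncE_bot_top]
        exact measurable_id
      · intro x
        rw [S_bot_top]
        simp only [truncE_bot_top]
        exact hpt_bt x
  | coe a =>
    induction b using EReal.rec with
    | bot => exact absurd hab (by simp)
    | coe b =>
      have hab' : a < b := EReal.coe_lt_coe_iff.mp hab
      refine main_wrapper P X hX hdist _ _ ?_ ?_ ?_
      · rw [S_coe_coe]; exact measurableSet_Ioo
      · simp only [truncE_coe_coe]
        exact ((measurable_id.max measurable_const).min measurable_const)
      · intro x
        rw [S_coe_coe]
        simp only [truncE_coe_coe]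
        exact hpt_cc hab' x
    | top =>
      refine main_wrapper P X hX hdist _ _ ?_ ?_ ?_
      · rw [S_coe_top]; exact measurableSet_Ioi
      · simp only [truncE_coe_top]
        exact measurable_id.max measurable_const
      · intro x
        rw [S_coe_top]
        simp only [truncE_coe_top]
        exact hpt_ct x
  | top => exact absurd hab (by simp)
end

section
/- Let d ≥ 2 and let ω = (ω(v) : v ∈ ℤ^d) be i.i.d. integrable vertex weights which are not almost surely constant. Then lim_{N→∞} E[T(0, N(e₁+e₂))]/N exists (possibly +∞) and is strictly greater than 2·E[ω(0)]. Equivalently, the asymptotic last-passage time satisfies g(½e₁ + ½e₂) > g(e₂). -/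
open MeasureTheory ProbabilityTheory

/-- A directed step on `ℤ^d`: add one standard basis vector. -/
def DirStep (d : ℕ) (x y : Fin d → ℤ) : Prop :=
  ∃ i : Fin d, y = x + Pi.single i 1

/-- `γ` is a directed path from `x` to `y`:  the list `γ` of vertices visited after `x`
forms a chain of directed steps starting at `x` and ending at `y`. -/
def IsDirPath (d : ℕ) (x y : Fin d → ℤ) (γ : List (Fin d → ℤ)) : Prop :=
  List.Chain (DirStep d) x γ ∧ (x :: γ).getLast (List.cons_ne_nil x γ) = y

/-- The directed last-passage time from `x` to `y` for vertex weights `ω`: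
the maximal weight of a directed path from `x` to `y`, where the weight of a path is
the sum of the vertex weights along it, the starting point excluded. -/
noncomputable def lppT (d : ℕ) (ω : (Fin d → ℤ) → ℝ) (x y : Fin d → ℤ) : ℝ :=
  sSup {s : ℝ | ∃ γ : List (Fin d → ℤ), IsDirPath d x y γ ∧ s = (γ.map ω).sum}


namespace LPPaux

variable {d : ℕ}

def endpt (x : Fin d → ℤ) : List (Fin d) → (Fin d → ℤ)
  | [] => x
  | i :: ds => endpt (x + Pi.single i 1) ds

def pathOf (x : Fin d → ℤ) : List (Fin d) → List (Fin d → ℤ)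
  | [] => []
  | i :: ds => (x + Pi.single i 1) :: pathOf (x + Pi.single i 1) ds

@[simp] lemma endpt_nil (x : Fin d → ℤ) : endpt x ([] : List (Fin d)) = x := rfl
@[simp] lemma endpt_cons (x : Fin d → ℤ) (i : Fin d) (ds : List (Fin d)) :
    endpt x (i :: ds) = endpt (x + Pi.single i 1) ds := rfl
@[simp] lemma pathOf_nil (x : Fin d → ℤ) : pathOf x ([] : List (Fin d)) = [] := rfl
@[simp] lemma pathOf_cons (x : Fin d → ℤ) (i : Fin d) (ds : List (Fin d)) :
    pathOf x (i :: ds) = (x + Pi.single i 1) :: pathOf (x + Pi.single i 1) ds := rfl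

lemma endpt_append (x : Fin d → ℤ) (l₁ l₂ : List (Fin d)) :
    endpt x (l₁ ++ l₂) = endpt (endpt x l₁) l₂ := by
  induction l₁ generalizing x with
  | nil => rfl
  | cons i l ih => simp [ih]

lemma pathOf_append (x : Fin d → ℤ) (l₁ l₂ : List (Fin d)) :
    pathOf x (l₁ ++ l₂) = pathOf x l₁ ++ pathOf (endpt x l₁) l₂ := by
  induction l₁ generalizing x with
  | nil => rfl
  | cons i l ih => simp [ih]

lemma endpt_add (x u : Fin d → ℤ) (ds : List (Fin d)) :
    endpt (x + u) ds = endpt x ds + u := by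
  induction ds generalizing x with
  | nil => rfl
  | cons i l ih =>
      simp only [endpt_cons]
      rw [show x + u + Pi.single i 1 = (x + Pi.single i 1) + u by ring, ih]

lemma pathOf_add (x u : Fin d → ℤ) (ds : List (Fin d)) :
    pathOf (x + u) ds = (pathOf x ds).map (· + u) := by
  induction ds generalizing x with
  | nil => rfl
  | cons i l ih =>
      simp only [pathOf_cons, List.map_cons]
      rw [show x + u + Pi.single i 1 = (x + Pi.single i 1) + u by ring, ih]

@[simp] lemma length_pathOf (x : Fin d → ℤ) (ds : List (Fin d)) :
    (pathOf x ds).length = ds.length := by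
  induction ds generalizing x with
  | nil => rfl
  | cons i l ih => simp [ih]

lemma csum_endpt (x : Fin d → ℤ) (ds : List (Fin d)) :
    ∑ i, endpt x ds i = ∑ i, x i + ds.length := by
  induction ds generalizing x with
  | nil => simp
  | cons i l ih =>
      simp only [endpt_cons, ih, List.length_cons]
      simp only [Pi.add_apply, Finset.sum_add_distrib, Finset.sum_pi_single]
      simp
      push_cast; ring

lemma isDirPath_iff (x y : Fin d → ℤ) (γ : List (Fin d → ℤ)) :
    IsDirPath d x y γ ↔ ∃ ds : List (Fin d), pathOf x ds = γ ∧ endpt x ds = y := by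
  induction γ generalizing x with
  | nil =>
      constructor
      · rintro ⟨-, h⟩
        exact ⟨[], rfl, by simpa using h⟩
      · rintro ⟨ds, hp, he⟩
        have : ds = [] := by
          have := length_pathOf x ds
          rw [hp] at this; simpa using this.symm
        subst this
        exact ⟨List.Chain.nil, by simpa using he⟩
  | cons v γ ih =>
      constructor
      · rintro ⟨hc, hl⟩
        rw [List.Chain, List.chain_cons] at hc
        obtain ⟨⟨i, hi⟩, hc2⟩ := hc
        have hl2 : (v :: γ).getLast (List.cons_ne_nil v γ) = y := by
          rw [← hl]; exact (List.getLast_cons _).symm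
        obtain ⟨ds, hp, he⟩ := (ih v).mp ⟨hc2, hl2⟩
        exact ⟨i :: ds, by simp [← hi, hp], by simp [← hi, he]⟩
      · rintro ⟨ds, hp, he⟩
        cases ds with
        | nil => exact absurd hp (by simp)
        | cons i ds =>
            simp only [pathOf_cons, List.cons.injEq] at hp
            obtain ⟨hv, hp⟩ := hp
            simp only [endpt_cons] at he
            subst hv
            obtain ⟨hc2, hl2⟩ := (ih _).mpr ⟨ds, hp, he⟩
            refine ⟨List.chain_cons.mpr ⟨⟨i, rfl⟩, hc2⟩, ?_⟩
            rw [List.getLast_cons]; exact hl2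

lemma D_finite (x y : Fin d → ℤ) : {ds : List (Fin d) | endpt x ds = y}.Finite := by
  apply Set.Finite.subset (List.finite_length_eq (α := Fin d) (n := (∑ i, (y i - x i)).toNat))
  intro ds hds
  simp only [Set.mem_setOf_eq] at hds ⊢
  have := csum_endpt x ds
  rw [hds] at this
  have h2 : (ds.length : ℤ) = ∑ i, (y i - x i) := by
    rw [Finset.sum_sub_distrib]; omega
  omega

noncomputable def DF (x y : Fin d → ℤ) : Finset (List (Fin d)) := (D_finite x y).toFinset

@[simp] lemma mem_DF {x y : Fin d → ℤ} {ds : List (Fin d)} :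
    ds ∈ DF x y ↔ endpt x ds = y := by simp [DF]

noncomputable def wt (ω : (Fin d → ℤ) → ℝ) (x : Fin d → ℤ) (ds : List (Fin d)) : ℝ :=
  ((pathOf x ds).map ω).sum

lemma lppT_eq_sup' (ω : (Fin d → ℤ) → ℝ) (x y : Fin d → ℤ) (h : (DF x y).Nonempty) :
    lppT d ω x y = (DF x y).sup' h (wt ω x) := by
  rw [Finset.sup'_eq_csSup_image]
  unfold lppT
  congr 1
  ext s
  simp only [Set.mem_setOf_eq, Set.mem_image, Finset.mem_coe, mem_DF]
  constructor
  · rintro ⟨γ, hγ, rfl⟩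
    obtain ⟨ds, hp, he⟩ := (isDirPath_iff x y γ).mp hγ
    exact ⟨ds, he, by rw [wt, hp]⟩
  · rintro ⟨ds, he, rfl⟩
    exact ⟨pathOf x ds, (isDirPath_iff x y _).mpr ⟨ds, rfl, he⟩, rfl⟩

lemma endpt_replicate (n : ℕ) (i : Fin d) (x : Fin d → ℤ) :
    endpt x (List.replicate n i) = x + n • Pi.single i 1 := by
  induction n generalizing x with
  | zero => simp
  | succ n ih =>
      rw [List.replicate_succ, endpt_cons, ih, succ_nsmul]
      abel

end LPPaux

namespace LPPaux2

variable {α Ω : Type*} [MeasurableSpace Ω]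

lemma measurable_list_sum {V : Type*} {X : Type*} [MeasurableSpace X] (l : List V) (F : V → X → ℝ)
    (h : ∀ v, Measurable (F v)) : Measurable (fun x => (l.map (fun v => F v x)).sum) := by
  induction l with
  | nil => simpa using measurable_const
  | cons v l ih => simp only [List.map_cons, List.sum_cons]; exact (h v).add ih

lemma integrable_list_sum {V : Type*} (P : Measure Ω) (l : List V) (F : V → Ω → ℝ)
    (h : ∀ v, Integrable (F v) P) :
    Integrable (fun ω => (l.map (fun v => F v ω)).sum) P := by
  induction l with
  | nil => simpa using integrable_const (0:ℝ)
  | cons v l ih => simp only [List.map_cons, List.sum_cons]; exact (h v).add ih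

lemma measurable_sup' {X : Type*} [MeasurableSpace X] {s : Finset α} (h : s.Nonempty)
    (f : α → X → ℝ) (hf : ∀ a, Measurable (f a)) :
    Measurable (fun x => s.sup' h (fun a => f a x)) := by
  induction h using Finset.Nonempty.cons_induction with
  | singleton a => simpa using hf a
  | cons a s ha hs ih =>
      rw [show (fun x => (Finset.cons a s ha).sup' (Finset.cons_nonempty ha) (fun b => f b x)) = fun x => f a x ⊔ s.sup' hs (fun b => f b x) from funext fun x => Finset.sup'_cons hs _]
      exact (hf a).sup ih

lemma integrable_sup' (P : Measure Ω) {s : Finset α} (h : s.Nonempty) (f : α → Ω → ℝ)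
    (hf : ∀ a, Integrable (f a) P) :
    Integrable (fun ω => s.sup' h (fun a => f a ω)) P := by
  induction h using Finset.Nonempty.cons_induction with
  | singleton a => simpa using hf a
  | cons a s ha hs ih =>
      rw [show (fun x => (Finset.cons a s ha).sup' (Finset.cons_nonempty ha) (fun b => f b x)) = fun x => f a x ⊔ s.sup' hs (fun b => f b x) from funext fun x => Finset.sup'_cons hs _]
      exact (hf a).sup ih

lemma joint_law {V : Type*} {P : Measure Ω} [IsProbabilityMeasure P]
    (W : V → Ω → ℝ) (hmeas : ∀ v, Measurable (W v))
    (hindep : iIndepFun W P)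
    {α : Type*} [Fintype α] (g : α → V) (hg : Function.Injective g) :
    P.map (fun ω (a : α) => W (g a) ω) = Measure.pi (fun a => P.map (W (g a))) := by
  have hprob : ∀ a : α, IsProbabilityMeasure (P.map (W (g a))) :=
    fun a => Measure.isProbabilityMeasure_map (hmeas _).aemeasurable
  symm
  apply Measure.pi_eq
  intro s hs
  rw [Measure.map_apply (measurable_pi_lambda _ fun a => hmeas (g a))
    (MeasurableSet.univ_pi hs)]
  classical
  set S : Finset V := Finset.image g Finset.univ with hS
  set sets : V → Set ℝ := fun v => ⋂ (a : α) (_ : g a = v), s a with hsets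
  have hpre : (fun ω (a : α) => W (g a) ω) ⁻¹' (Set.pi Set.univ s)
      = ⋂ v ∈ S, W v ⁻¹' sets v := by
    ext ω
    simp only [Set.mem_preimage, Set.mem_pi, Set.mem_univ, forall_true_left, Set.mem_iInter,
      hS, Finset.mem_image, Finset.mem_univ, true_and, hsets, forall_exists_index]
    constructor
    · rintro h v a rfl
      intro a' ha'
      cases hg ha'
      exact h a
    · intro h a
      exact h (g a) a rfl a rfl
  rw [hpre]
  have hsetsm : ∀ v, v ∈ S → MeasurableSet (sets v) := by
    intro v _
    exact MeasurableSet.iInter fun a => MeasurableSet.iInter fun _ => hs a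
  rw [hindep.measure_inter_preimage_eq_mul S hsetsm]
  rw [hS, Finset.prod_image (fun x _ y _ h => hg h)]
  apply Finset.prod_congr rfl
  intro a _
  have : sets (g a) = s a := by
    ext r
    simp only [hsets, Set.mem_iInter]
    exact ⟨fun h => h a rfl, fun h a' ha' => by cases hg ha'; exact h⟩
  rw [this, Measure.map_apply (hmeas _) (hs a)]

end LPPaux2

namespace LPPaux3

variable {Ω : Type*} [MeasurableSpace Ω]

lemma max_eq_half (a b : ℝ) : max a b = (a + b + |a - b|) / 2 := by
  rcases le_total a b with h | h
  · rw [max_eq_right h, abs_of_nonpos (by linarith)]; ring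
  · rw [max_eq_left h, abs_of_nonneg (by linarith)]; ring

lemma integral_eq_of_map_eq {X Y : Ω → ℝ} {P : Measure Ω}
    (hX : Measurable X) (hY : Measurable Y) (h : P.map Y = P.map X) :
    ∫ ω, Y ω ∂P = ∫ ω, X ω ∂P := by
  have h1 : ∫ ω, Y ω ∂P = ∫ x, x ∂(P.map Y) :=
    (integral_map hY.aemeasurable aestronglyMeasurable_id).symm
  have h2 : ∫ ω, X ω ∂P = ∫ x, x ∂(P.map X) :=
    (integral_map hX.aemeasurable aestronglyMeasurable_id).symm
  rw [h1, h2, h]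

lemma integral_lt_integral_max (P : Measure Ω) [IsProbabilityMeasure P]
    (X Y Z : Ω → ℝ) (hX : Measurable X) (hY : Measurable Y) (hZ : Measurable Z)
    (hXi : Integrable X P) (hYi : Integrable Y P)
    (hind : IndepFun X Y P) (hlawY : P.map Y = P.map X) (hlawZ : P.map Z = P.map X)
    (hnc : ¬ ∃ r : ℝ, Z =ᵐ[P] fun _ => r) :
    ∫ ω, X ω ∂P < ∫ ω, max (X ω) (Y ω) ∂P := by
  have hEY : ∫ ω, Y ω ∂P = ∫ ω, X ω ∂P := integral_eq_of_map_eq hX hY hlawY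
  have habsi : Integrable (fun ω => |X ω - Y ω|) P := (hXi.sub hYi).abs
  have hmax : ∫ ω, max (X ω) (Y ω) ∂P
      = (∫ ω, X ω ∂P + ∫ ω, Y ω ∂P + ∫ ω, |X ω - Y ω| ∂P) / 2 := by
    have h1 : ∫ ω, max (X ω) (Y ω) ∂P = ∫ ω, (X ω + Y ω + |X ω - Y ω|) / 2 ∂P :=
      integral_congr_ae (Filter.Eventually.of_forall fun ω => max_eq_half _ _)
    have h2 : ∫ a, (X a + Y a) + |X a - Y a| ∂P
        = (∫ a, X a + Y a ∂P) + ∫ a, |X a - Y a| ∂P := integral_add (hXi.add hYi) habsi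
    have h3 : ∫ a, X a + Y a ∂P = (∫ a, X a ∂P) + ∫ a, Y a ∂P := integral_add hXi hYi
    rw [h1, integral_div, h2, h3]
  have habs_pos : 0 < ∫ ω, |X ω - Y ω| ∂P := by
    rcases (integral_nonneg (f := fun ω => |X ω - Y ω|) (fun ω => abs_nonneg (X ω - Y ω))).lt_or_eq with h | h
    · exact h
    exfalso
    have hae : (fun ω => |X ω - Y ω|) =ᵐ[P] 0 :=
      (integral_eq_zero_iff_of_nonneg (fun ω => abs_nonneg _) habsi).mp h.symm
    have hXY : ∀ᵐ ω ∂P, X ω = Y ω := by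
      filter_upwards [hae] with ω hω
      have h0 : |X ω - Y ω| = (0 : ℝ) := hω
      have := abs_eq_zero.mp h0
      linarith
    set μ : Measure ℝ := P.map X with hμ
    have hμprob : IsProbabilityMeasure μ := Measure.isProbabilityMeasure_map hX.aemeasurable
    have hDm : MeasurableSet (Set.diagonal ℝ) := isClosed_diagonal.measurableSet
    have hpair : Measurable (fun ω => (X ω, Y ω)) := hX.prodMk hY
    have hjoint : P.map (fun ω => (X ω, Y ω)) = μ.prod μ := by
      rw [(indepFun_iff_map_prod_eq_prod_map_map hX.aemeasurable hY.aemeasurable).mp hind,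
        hlawY]
    have hSm : MeasurableSet {ω | X ω = Y ω} := by
      have hset : {ω | X ω = Y ω} = (fun ω => (X ω, Y ω)) ⁻¹' (Set.diagonal ℝ) := by
        ext ω; simp [Set.mem_diagonal_iff]
      rw [hset]; exact hpair hDm
    have hcompl : P {ω | X ω = Y ω}ᶜ = 0 := by
      have h0 := ae_iff.mp hXY
      have hss : {ω | X ω = Y ω}ᶜ = {ω | ¬ X ω = Y ω} := by ext ω; simp
      rw [hss]; exact h0
    have hfull : P {ω | X ω = Y ω} = 1 := by
      have h1 := measure_compl hSm (measure_ne_top P _)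
      rw [hcompl, measure_univ] at h1
      exact le_antisymm prob_le_one (tsub_eq_zero_iff_le.mp h1.symm)
    have h2 : (μ.prod μ) (Set.diagonal ℝ) = 1 := by
      rw [← hjoint, Measure.map_apply hpair hDm]
      have hset : (fun ω => (X ω, Y ω)) ⁻¹' (Set.diagonal ℝ) = {ω | X ω = Y ω} := by
        ext ω; simp [Set.mem_diagonal_iff]
      rw [hset, hfull]
    have hpre : ∀ x : ℝ, Prod.mk x ⁻¹' (Set.diagonal ℝ) = {x} := by
      intro x; ext y; simp [Set.mem_diagonal_iff, eq_comm]
    have hprodeq : (μ.prod μ) (Set.diagonal ℝ) = ∫⁻ x, μ {x} ∂μ := by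
      rw [Measure.prod_apply hDm]
      apply lintegral_congr
      intro x; rw [hpre x]
    have hfmeas : Measurable (fun x : ℝ => μ {x}) := by
      have h3 := measurable_measure_prodMk_left (ν := μ) hDm
      simpa only [hpre] using h3
    have hint1 : ∫⁻ x, μ {x} ∂μ = 1 := by rw [← hprodeq, h2]
    have hle1 : ∀ x : ℝ, μ {x} ≤ 1 := fun x => prob_le_one
    have hsub : ∫⁻ x, (1 - μ {x}) ∂μ = 0 := by
      rw [lintegral_sub hfmeas (by rw [hint1]; exact ENNReal.one_ne_top)
        (Filter.Eventually.of_forall hle1), hint1, lintegral_one, measure_univ, tsub_self]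
    have hae1 : ∀ᵐ x ∂μ, (1 : ENNReal) - μ {x} = 0 :=
      (lintegral_eq_zero_iff (measurable_const.sub hfmeas)).mp hsub
    haveI : (ae μ).NeBot := ae_neBot.mpr (IsProbabilityMeasure.ne_zero μ)
    obtain ⟨x₀, hx₀⟩ := hae1.exists
    have hx1 : μ {x₀} = 1 := le_antisymm (hle1 x₀) (tsub_eq_zero_iff_le.mp hx₀)
    have hZfull : P (Z ⁻¹' {x₀}) = 1 := by
      rw [← Measure.map_apply hZ (measurableSet_singleton x₀), hlawZ, hx1]
    apply hnc
    refine ⟨x₀, ?_⟩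
    have hZm : MeasurableSet (Z ⁻¹' {x₀}) := hZ (measurableSet_singleton x₀)
    have hc := measure_compl hZm (measure_ne_top P _)
    rw [hZfull, measure_univ, tsub_self] at hc
    apply ae_iff.mpr
    have hss : {a | ¬ Z a = (fun _ => x₀) a} = (Z ⁻¹' {x₀})ᶜ := by ext ω; simp
    rw [hss]; exact hc
  linarith [hmax, hEY]

end LPPaux3

namespace LPPaux4
open Filter

lemma fekete (a : ℕ → ℝ) (hsuper : ∀ m n, a m + a n ≤ a (m + n)) :
    Tendsto (fun N : ℕ => ((a N / N : ℝ) : EReal)) atTop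
      (nhds (⨆ k : ℕ, ((a (k + 1) / (k + 1) : ℝ) : EReal))) := by
  set L : EReal := ⨆ k : ℕ, ((a (k + 1) / (k + 1) : ℝ) : EReal) with hL
  set u : ℕ → EReal := fun N => ((a N / N : ℝ) : EReal) with hu
  have iter : ∀ q n r : ℕ, (q : ℝ) * a n + a r ≤ a (q * n + r) := by
    intro q n r
    induction q with
    | zero => simp
    | succ q ih =>
        have h1 : a n + a (q * n + r) ≤ a (n + (q * n + r)) := hsuper _ _
        have h2 : n + (q * n + r) = (q + 1) * n + r := by ring
        rw [h2] at h1
        push_cast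
        nlinarith [h1, ih]
  have hlimsup : limsup u atTop ≤ L := by
    apply limsup_le_of_le (by isBoundedDefault)
    filter_upwards [eventually_ge_atTop 1] with N hN
    have h : u N = ((a ((N - 1) + 1) / (((N - 1) + 1 : ℕ)) : ℝ) : EReal) := by
      congr 3 <;> omega
    rw [h]
    have := le_iSup (fun k : ℕ => ((a (k + 1) / ((k + 1 : ℕ)) : ℝ) : EReal)) (N - 1)
    refine le_trans (le_of_eq ?_) (le_trans this (le_of_eq ?_))
    · norm_num
    · rw [hL]; congr 1; funext k; norm_num
  have hliminf : L ≤ liminf u atTop := by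
    apply iSup_le
    intro k
    set n : ℕ := k + 1 with hn
    have hn0 : 0 < n := Nat.succ_pos k
    have hnR : (0 : ℝ) < n := by positivity
    set cm : ℝ := (Finset.range n).inf' (Finset.nonempty_range_iff.mpr hn0.ne') a with hcm
    set b : ℝ := a n / n with hb
    set g : ℕ → ℝ := fun N => (((N / n : ℕ) : ℝ) * a n + cm) / N with hg
    have hgle : ∀ N : ℕ, 1 ≤ N → g N ≤ a N / N := by
      intro N hN
      have hNR : (0 : ℝ) < N := by positivity
      have h3 : (N / n) * n + N % n = N := by
        rw [Nat.mul_comm]; exact Nat.div_add_mod N n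
      have h1 : cm ≤ a (N % n) :=
        Finset.inf'_le a (Finset.mem_range.mpr (Nat.mod_lt N hn0))
      have h2 := iter (N / n) n (N % n)
      rw [h3] at h2
      have hnum : ((N / n : ℕ) : ℝ) * a n + cm ≤ a N := by linarith
      show (((N / n : ℕ) : ℝ) * a n + cm) / N ≤ a N / N
      gcongr
    have hc : ∀ N : ℕ, ((N / n : ℕ) : ℝ) * (n : ℝ) = (N : ℝ) - ((N % n : ℕ) : ℝ) := by
      intro N
      have h3 : (N / n) * n + N % n = N := by
        rw [Nat.mul_comm]; exact Nat.div_add_mod N n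
      have h4 := congrArg (Nat.cast : ℕ → ℝ) h3
      rw [Nat.cast_add, Nat.cast_mul] at h4
      linarith
    set g' : ℕ → ℝ := fun N => (1 - ((N % n : ℕ) : ℝ) / N) * b + cm / N with hg'
    have heq : ∀ N : ℕ, 1 ≤ N → g' N = g N := by
      intro N hN
      have hNR : (0 : ℝ) < N := by positivity
      have hN0 : (N : ℝ) ≠ 0 := hNR.ne'
      have hn0' : (n : ℝ) ≠ 0 := hnR.ne'
      have e1 : (1 : ℝ) - ((N % n : ℕ) : ℝ) / N = (((N / n : ℕ) : ℝ) * (n : ℝ)) / N := by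
        rw [hc N]; field_simp
      show (1 - ((N % n : ℕ) : ℝ) / N) * (a n / n) + cm / N
          = (((N / n : ℕ) : ℝ) * a n + cm) / N
      rw [e1]
      field_simp
    have hmod : Tendsto (fun N : ℕ => ((N % n : ℕ) : ℝ) / N) atTop (nhds 0) := by
      apply squeeze_zero (fun N => by positivity) (g := fun N : ℕ => (n : ℝ) / N)
      · intro N
        rcases Nat.eq_zero_or_pos N with h | h
        · simp [h]
        · gcongr
          exact_mod_cast (Nat.mod_lt N hn0).le
      · exact tendsto_const_div_atTop_nhds_zero_nat (n : ℝ)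
    have htg' : Tendsto g' atTop (nhds b) := by
      have h1 : Tendsto (fun N : ℕ => (1 - ((N % n : ℕ) : ℝ) / N) * b + cm / N) atTop
          (nhds ((1 - 0) * b + 0)) :=
        ((tendsto_const_nhds.sub hmod).mul tendsto_const_nhds).add
          (tendsto_const_div_atTop_nhds_zero_nat cm)
      simpa using h1
    have htg : Tendsto g atTop (nhds b) := by
      apply htg'.congr'
      filter_upwards [eventually_ge_atTop 1] with N hN
      exact heq N hN
    have htcoe : Tendsto (fun N => ((g N : ℝ) : EReal)) atTop (nhds ((b : ℝ) : EReal)) :=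
      (continuous_coe_real_ereal.tendsto b).comp htg
    have hlim1 : ((b : ℝ) : EReal) = liminf (fun N => ((g N : ℝ) : EReal)) atTop :=
      htcoe.liminf_eq.symm
    have hlim2 : liminf (fun N => ((g N : ℝ) : EReal)) atTop ≤ liminf u atTop := by
      apply liminf_le_liminf ?_ (by isBoundedDefault) (by isBoundedDefault)
      filter_upwards [eventually_ge_atTop 1] with N hN
      exact EReal.coe_le_coe_iff.mpr (hgle N hN)
    have : ((a (k + 1) / ((k + 1 : ℕ) : ℝ) : ℝ) : EReal) ≤ liminf u atTop := by
      rw [show ((a (k + 1) / ((k + 1 : ℕ) : ℝ) : ℝ) : EReal) = ((b : ℝ) : EReal) by rw [hb]]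
      rw [hlim1]; exact hlim2
    refine le_trans (le_of_eq ?_) this
    norm_num [hn]
  have h1 : liminf u atTop = L :=
    le_antisymm (le_trans (liminf_le_limsup) hlimsup) hliminf
  have h2 : limsup u atTop = L :=
    le_antisymm hlimsup (le_trans hliminf (liminf_le_limsup))
  exact tendsto_of_liminf_eq_limsup h1 h2

end LPPaux4

open LPPaux LPPaux2 LPPaux3 LPPaux4 in
open Filter in
theorem strict_concavity_diagonal
    (d : ℕ) (hd : 2 ≤ d)
    {Ω : Type*} [MeasurableSpace Ω] (P : Measure Ω) [IsProbabilityMeasure P]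
    (W : (Fin d → ℤ) → Ω → ℝ)
    (hmeas : ∀ v, Measurable (W v))
    (hindep : iIndepFun W P)
    (hident : ∀ v, P.map (W v) = P.map (W 0))
    (hint : ∀ v, Integrable (W v) P)
    (hrandom : ¬ ∃ r : ℝ, W 0 =ᵐ[P] fun _ => r) :
    ∃ L : EReal,
      Tendsto
        (fun N : ℕ =>
          (((∫ ωc, lppT d (fun v => W v ωc) 0
              (fun i => if i.val < 2 then (N : ℤ) else 0) ∂P) / N : ℝ) : EReal))
        atTop (nhds L)
      ∧ ((2 * ∫ ωc, W 0 ωc ∂P : ℝ) : EReal) < L := by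
  classical
  set z : ℕ → (Fin d → ℤ) := fun N => fun i => if i.val < 2 then (N : ℤ) else 0 with hz
  set i0 : Fin d := ⟨0, by omega⟩ with hi0
  set i1 : Fin d := ⟨1, by omega⟩ with hi1
  have hi01 : i0 ≠ i1 := by simp [hi0, hi1, Fin.ext_iff]
  set e0 : Fin d → ℤ := Pi.single i0 1 with he0
  set e1 : Fin d → ℤ := Pi.single i1 1 with he1
  have hzadd : ∀ M N : ℕ, z (M + N) = z N + z M := by
    intro M N
    funext i
    simp only [hz, Pi.add_apply]
    split_ifs <;> push_cast <;> ring
  -- endpoint of the canonical staircase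
  have hmem_rep : ∀ N : ℕ, (List.replicate N i0 ++ List.replicate N i1) ∈ DF 0 (z N) := by
    intro N
    rw [mem_DF, endpt_append, endpt_replicate, endpt_replicate]
    funext i
    simp only [hz, hi0, hi1, Pi.add_apply, Pi.zero_apply, Pi.smul_apply, Pi.single_apply,
      smul_ite, smul_zero, nsmul_eq_mul, mul_one, zero_add, Fin.ext_iff,
      Pi.mul_apply, Pi.natCast_apply]
    split_ifs <;> omega
  have hne : ∀ N : ℕ, (DF (0 : Fin d → ℤ) (z N)).Nonempty := fun N => ⟨_, hmem_rep N⟩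
  set T : (N : ℕ) → ((Fin d → ℤ) → ℝ) → ℝ :=
    fun N ω => (DF (0 : Fin d → ℤ) (z N)).sup' (hne N) (wt ω 0) with hT
  -- integrability and measurability
  have hTint : ∀ (N : ℕ) (g : (Fin d → ℤ) → (Fin d → ℤ)),
      Integrable (fun ωc => T N (fun v => W (g v) ωc)) P := by
    intro N g
    exact integrable_sup' P (hne N) _
      (fun ds => integrable_list_sum P (pathOf 0 ds) (fun v ωc => W (g v) ωc)
        (fun v => hint (g v)))
  have hTint0 : ∀ N : ℕ, Integrable (fun ωc => T N (fun v => W v ωc)) P :=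
    fun N => hTint N id
  set A : ℕ → ℝ := fun N => ∫ ωc, T N (fun v => W v ωc) ∂P with hA
  -- translation invariance in law
  have hshift : ∀ (N : ℕ) (u : Fin d → ℤ),
      ∫ ωc, T N (fun v => W (v + u) ωc) ∂P = A N := by
    intro N u
    set A' : Finset (Fin d → ℤ) :=
      (DF (0 : Fin d → ℤ) (z N)).biUnion (fun ds => (pathOf (0 : Fin d → ℤ) ds).toFinset)
      with hA'
    set ext : (↥A' → ℝ) → (Fin d → ℤ) → ℝ :=
      fun η v => if hv : v ∈ A' then η ⟨v, hv⟩ else 0 with hext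
    set G : (↥A' → ℝ) → ℝ :=
      fun η => (DF (0 : Fin d → ℤ) (z N)).sup' (hne N) (wt (ext η) 0) with hG
    have hGspec : ∀ ω : (Fin d → ℤ) → ℝ, G (fun a : ↥A' => ω ↑a) = T N ω := by
      intro ω
      apply Finset.sup'_congr (hne N) rfl
      intro ds hds
      simp only [wt]
      congr 1
      apply List.map_congr_left
      intro v hv
      have hvA : v ∈ A' := Finset.mem_biUnion.mpr ⟨ds, hds, List.mem_toFinset.mpr hv⟩
      simp [hext, hvA]
    have hGmeas : Measurable G := by
      apply measurable_sup' (hne N)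
      intro ds
      apply measurable_list_sum (pathOf 0 ds) (fun v η => ext η v)
      intro v
      by_cases hv : v ∈ A'
      · simpa [hext, hv] using measurable_pi_apply (⟨v, hv⟩ : ↥A')
      · simpa [hext, hv] using measurable_const
    have hvecu : Measurable (fun ωc => (fun a : ↥A' => W (↑a + u) ωc)) :=
      measurable_pi_lambda _ (fun a => hmeas _)
    have hvec0 : Measurable (fun ωc => (fun a : ↥A' => W ↑a ωc)) :=
      measurable_pi_lambda _ (fun a => hmeas _)
    have hinj1 : Function.Injective (fun a : ↥A' => (↑a : Fin d → ℤ) + u) := by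
      intro a b hab
      exact Subtype.ext (by simpa using hab)
    have hinj2 : Function.Injective (fun a : ↥A' => (↑a : Fin d → ℤ)) :=
      Subtype.coe_injective
    have hlaw : P.map (fun ωc => (fun a : ↥A' => W (↑a + u) ωc))
        = P.map (fun ωc => (fun a : ↥A' => W ↑a ωc)) := by
      rw [joint_law W hmeas hindep _ hinj1, joint_law W hmeas hindep _ hinj2]
      congr 1
      funext a
      rw [hident]
      exact (hident _).symm
    calc ∫ ωc, T N (fun v => W (v + u) ωc) ∂P
        = ∫ ωc, G (fun a : ↥A' => W (↑a + u) ωc) ∂P := by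
          refine integral_congr_ae (Filter.Eventually.of_forall fun ωc => ?_)
          exact (hGspec (fun v => W (v + u) ωc)).symm
      _ = ∫ η, G η ∂(P.map (fun ωc => (fun a : ↥A' => W (↑a + u) ωc))) :=
          (integral_map hvecu.aemeasurable hGmeas.aestronglyMeasurable).symm
      _ = ∫ η, G η ∂(P.map (fun ωc => (fun a : ↥A' => W ↑a ωc))) := by rw [hlaw]
      _ = ∫ ωc, G (fun a : ↥A' => W ↑a ωc) ∂P :=
          integral_map hvec0.aemeasurable hGmeas.aestronglyMeasurable
      _ = A N := by
          refine integral_congr_ae (Filter.Eventually.of_forall fun ωc => ?_)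
          exact hGspec (fun v => W v ωc)
  -- superadditivity
  have hsuper : ∀ M N : ℕ, A M + A N ≤ A (M + N) := by
    intro M N
    have hpoint : ∀ ω : (Fin d → ℤ) → ℝ,
        T M ω + T N (fun v => ω (v + z M)) ≤ T (M + N) ω := by
      intro ω
      obtain ⟨ds1, hds1, h1⟩ := Finset.exists_mem_eq_sup' (hne M) (wt ω 0)
      obtain ⟨ds2, hds2, h2⟩ := Finset.exists_mem_eq_sup' (hne N)
        (wt (fun v => ω (v + z M)) 0)
      simp only [hT]
      rw [h1, h2]
      have hmem : ds1 ++ ds2 ∈ DF (0 : Fin d → ℤ) (z (M + N)) := by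
        rw [mem_DF, endpt_append, mem_DF.mp hds1]
        have : endpt (z M) ds2 = endpt 0 ds2 + z M := by
          rw [show z M = 0 + z M by rw [zero_add], endpt_add, zero_add]
        rw [this, mem_DF.mp hds2, hzadd]
      have hwt : wt ω 0 ds1 + wt (fun v => ω (v + z M)) 0 ds2 = wt ω 0 (ds1 ++ ds2) := by
        simp only [wt]
        rw [pathOf_append, List.map_append, List.sum_append]
        congr 1
        rw [mem_DF.mp hds1, show z M = 0 + z M by rw [zero_add], pathOf_add,
          List.map_map]
        simp [Function.comp_def, zero_add]
      rw [hwt]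
      exact Finset.le_sup' (wt ω 0) hmem
    have hint1 : Integrable
        (fun ωc => T M (fun v => W v ωc) + T N (fun v => W (v + z M) ωc)) P :=
      (hTint0 M).add (hTint N (· + z M))
    have hmono := integral_mono hint1 (hTint0 (M + N))
      (fun ωc => hpoint (fun v => W v ωc))
    rw [integral_add (hTint0 M) (hTint N (· + z M))] at hmono
    rw [hshift N (z M)] at hmono
    exact hmono
  -- strict inequality at N = 1
  have hee : e0 + e1 = z 1 := by
    funext i
    simp only [he0, he1, hz, hi0, hi1, Pi.add_apply, Pi.single_apply, Fin.ext_iff]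
    split_ifs <;> omega
  have hee' : e1 + e0 = z 1 := by rw [add_comm]; exact hee
  have hmem1 : [i0, i1] ∈ DF (0 : Fin d → ℤ) (z 1) := by
    rw [mem_DF]
    show endpt (0 + Pi.single i0 1 + Pi.single i1 1) ([] : List (Fin d)) = z 1
    simp only [endpt_nil, zero_add, ← he0, ← he1]
    exact hee
  have hmem2 : [i1, i0] ∈ DF (0 : Fin d → ℤ) (z 1) := by
    rw [mem_DF]
    show endpt (0 + Pi.single i1 1 + Pi.single i0 1) ([] : List (Fin d)) = z 1
    simp only [endpt_nil, zero_add, ← he0, ← he1]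
    exact hee'
  have hw1 : ∀ ω : (Fin d → ℤ) → ℝ, wt ω 0 ([i0, i1]) = ω e0 + ω (z 1) := by
    intro ω
    show ω (0 + Pi.single i0 1) + (ω (0 + Pi.single i0 1 + Pi.single i1 1) + 0) = _
    rw [zero_add, ← he0, ← he1, hee, add_zero]
  have hw2 : ∀ ω : (Fin d → ℤ) → ℝ, wt ω 0 ([i1, i0]) = ω e1 + ω (z 1) := by
    intro ω
    show ω (0 + Pi.single i1 1) + (ω (0 + Pi.single i1 1 + Pi.single i0 1) + 0) = _
    rw [zero_add, ← he0, ← he1, hee', add_zero]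
  have hpoint1 : ∀ ωc,
      max (W e0 ωc) (W e1 ωc) + W (z 1) ωc ≤ T 1 (fun v => W v ωc) := by
    intro ωc
    rw [show max (W e0 ωc) (W e1 ωc) + W (z 1) ωc
        = max (W e0 ωc + W (z 1) ωc) (W e1 ωc + W (z 1) ωc) from
      (max_add_add_right _ _ _).symm]
    apply max_le
    · have := Finset.le_sup' (wt (fun v => W v ωc) 0) hmem1
      rw [hw1] at this
      exact this
    · have := Finset.le_sup' (wt (fun v => W v ωc) 0) hmem2
      rw [hw2] at this
      exact this
  have hmaxint : Integrable (fun ωc => max (W e0 ωc) (W e1 ωc)) P := (hint e0).sup (hint e1)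
  have he01 : e0 ≠ e1 := by
    intro h
    have := congrFun h i0
    rw [he0, he1, Pi.single_eq_same, Pi.single_apply] at this
    rw [if_neg hi01] at this
    exact one_ne_zero this
  have hEmax : ∫ ωc, W e0 ωc ∂P < ∫ ωc, max (W e0 ωc) (W e1 ωc) ∂P :=
    integral_lt_integral_max P (W e0) (W e1) (W 0) (hmeas e0) (hmeas e1) (hmeas 0)
      (hint e0) (hint e1) (hindep.indepFun he01)
      ((hident e1).trans (hident e0).symm) (hident e0).symm hrandom
  have hE0 : ∫ ωc, W e0 ωc ∂P = ∫ ωc, W 0 ωc ∂P :=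
    integral_eq_of_map_eq (hmeas 0) (hmeas e0) (hident e0)
  have hEz : ∫ ωc, W (z 1) ωc ∂P = ∫ ωc, W 0 ωc ∂P :=
    integral_eq_of_map_eq (hmeas 0) (hmeas (z 1)) (hident (z 1))
  have hA1 : 2 * ∫ ωc, W 0 ωc ∂P < A 1 := by
    have hintsum : Integrable
        (fun ωc => max (W e0 ωc) (W e1 ωc) + W (z 1) ωc) P := hmaxint.add (hint (z 1))
    have hmono := integral_mono hintsum (hTint0 1) hpoint1
    rw [integral_add hmaxint (hint (z 1))] at hmono
    rw [hEz] at hmono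
    rw [hA]
    linarith [hEmax, hE0, hmono]
  -- conclusion via Fekete's lemma
  refine ⟨⨆ k : ℕ, ((A (k + 1) / (k + 1) : ℝ) : EReal), ?_, ?_⟩
  · have hfek := fekete A hsuper
    have hiA : ∀ N : ℕ, (∫ ωc, lppT d (fun v => W v ωc) 0
        (fun i => if i.val < 2 then (N : ℤ) else 0) ∂P) = A N := by
      intro N
      refine integral_congr_ae (Filter.Eventually.of_forall fun ωc => ?_)
      exact lppT_eq_sup' (fun v => W v ωc) 0 (z N) (hne N)
    simpa only [hiA] using hfek
  · have h1 : ((2 * ∫ ωc, W 0 ωc ∂P : ℝ) : EReal) < ((A 1 : ℝ) : EReal) :=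
      EReal.coe_lt_coe_iff.mpr hA1
    refine lt_of_lt_of_le h1 ?_
    have h2 := le_iSup (fun k : ℕ => ((A (k + 1) / (k + 1) : ℝ) : EReal)) 0
    refine le_trans (le_of_eq ?_) h2
    norm_num
end

section
/- Let α, β > 0 and let X have the Gamma(α, β) distribution. Then there is a finite constant c (depending on α, β) such that for all 0 ≤ a < b ≤ ∞, E|X∧b∨a − E[X∧b∨a]| ≤ c · E[(1 + X)·1_{a < X < b}], where X∧b∨a = min(max(X,a),b). -/
open MeasureTheory Real Set ProbabilityTheory Filter
open scoped ENNReal NNReal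


lemma ereal_coe_max (x y : ℝ) : ((max x y : ℝ) : EReal) = max (x : EReal) (y : EReal) := by
  rcases le_total x y with h | h
  · rw [max_eq_right h, max_eq_right (EReal.coe_le_coe_iff.2 h)]
  · rw [max_eq_left h, max_eq_left (EReal.coe_le_coe_iff.2 h)]

lemma ereal_coe_min (x y : ℝ) : ((min x y : ℝ) : EReal) = min (x : EReal) (y : EReal) := by
  rcases le_total x y with h | h
  · rw [min_eq_left h, min_eq_left (EReal.coe_le_coe_iff.2 h)]
  · rw [min_eq_right h, min_eq_right (EReal.coe_le_coe_iff.2 h)]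

lemma truncE_top (x A : ℝ) : truncE x (A : EReal) ⊤ = max x A := by
  simp [truncE, ← ereal_coe_max]

lemma truncE_coe (x A B : ℝ) : truncE x (A : EReal) (B : EReal) = min (max x A) B := by
  simp [truncE, ← ereal_coe_max, ← ereal_coe_min]

lemma T1real (A x y : ℝ) :
    |max x A - max y A| ≤ max ((max x y) - max A (min x y)) 0 := by
  rcases le_total x y with h | h <;>
  · rw [abs_sub_le_iff]
    constructor <;>
    · rcases le_total x A with h1 | h1 <;> rcases le_total y A with h2 | h2 <;>
        simp [max_def, min_def, h, h1, h2] <;> first | linarith | (split_ifs <;> linarith)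

lemma T2real (A B x y : ℝ) :
    |min (max x A) B - min (max y A) B| ≤ max ((min B (max x y)) - max A (min x y)) 0 := by
  rcases le_total x y with h | h <;>
  · rw [abs_sub_le_iff]
    constructor <;>
    · rcases le_total x A with h1 | h1 <;> rcases le_total y A with h2 | h2 <;>
      rcases le_total x B with h3 | h3 <;> rcases le_total y B with h4 | h4 <;>
      rcases le_total A B with h5 | h5 <;>
        simp [max_def, min_def, h, h1, h2, h3, h4, h5] <;>
          first | linarith | (split_ifs <;> linarith)

variable {α β : ℝ}

lemma lint_pdf_Iic_zero : ∫⁻ s in Iic (0:ℝ), gammaPDF α β s = 0 := by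
  rw [setLIntegral_congr (Iio_ae_eq_Iic (a := (0:ℝ))).symm]
  exact lintegral_gammaPDF_of_nonpos le_rfl

lemma gamma_Iic_zero : gammaMeasure α β (Iic 0) = 0 := by
  rw [gammaMeasure, withDensity_apply _ measurableSet_Iic]
  exact lint_pdf_Iic_zero

lemma lint_pdf_Ioi_one (hα : 0 < α) (hβ : 0 < β) :
    ∫⁻ s in Ioi (0:ℝ), gammaPDF α β s = 1 := by
  have h1 := lintegral_gammaPDF_eq_one hα hβ
  rw [← lintegral_add_compl (gammaPDF α β) (measurableSet_Iic (a := (0:ℝ))),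
    lint_pdf_Iic_zero, compl_Iic, zero_add] at h1
  exact h1

lemma lint_exp_Ioi (hβ : 0 < β) (u : ℝ) :
    ∫⁻ s in Ioi u, ENNReal.ofReal (exp (-(β*s))) = ENNReal.ofReal (exp (-(β*u))/β) := by
  rw [← ofReal_integral_eq_lintegral_ofReal]
  · congr 1
    have h := integral_comp_mul_left_Ioi (fun x => exp (-x)) u hβ
    simp only [smul_eq_mul] at h
    rw [h, integral_exp_neg_Ioi]
    field_simp
  · simpa [neg_mul, IntegrableOn] using exp_neg_integrableOn_Ioi u hβ
  · exact ae_of_all _ fun s => (exp_pos _).le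

lemma lint_shift (h : ℝ → ℝ≥0∞) (t : ℝ) :
    ∫⁻ s in Ioi t, h (s - t) = ∫⁻ u in Ioi (0:ℝ), h u := by
  have mp : MeasurePreserving (fun x : ℝ => x + t) volume volume :=
    measurePreserving_add_right volume t
  have me : MeasurableEmbedding (fun x : ℝ => x + t) :=
    (MeasurableEquiv.addRight (t : ℝ)).measurableEmbedding
  have key := mp.setLIntegral_comp_preimage_emb me (fun s => h (s - t)) (Ioi t)
  simp only [add_sub_cancel_right, preimage_add_const_Ioi, sub_self] at key
  rw [← key]

lemma base_I (hα : 0 < α) (hβ : 0 < β) :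
    ENNReal.ofReal (β^α/Real.Gamma α) *
      ∫⁻ u in Ioi (0:ℝ), ENNReal.ofReal (u^(α-1) * exp (-(β*u))) = 1 := by
  rw [← lintegral_const_mul' _ _ ENNReal.ofReal_ne_top, ← lint_pdf_Ioi_one hα hβ]
  refine setLIntegral_congr_fun measurableSet_Ioi (fun u hu => ?_)
  rw [← ENNReal.ofReal_mul (by positivity), gammaPDF_of_nonneg (le_of_lt hu), mul_assoc]

variable {α β : ℝ}

lemma moment_rw (hα : 0 < α) (hβ : 0 < β) (x : ℝ) :
    ENNReal.ofReal (|x| * gammaPDFReal α β x)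
      = ENNReal.ofReal (α/β) * gammaPDF (α+1) β x := by
  rcases lt_or_ge x 0 with hx | hx
  · rw [gammaPDF_of_neg hx]
    simp [gammaPDFReal, not_le.2 hx]
  · rw [gammaPDF_of_nonneg hx, ← ENNReal.ofReal_mul (by positivity), abs_of_nonneg hx]
    congr 1
    have hxx : x * x^(α-1) = x^α := by
      rcases eq_or_lt_of_le hx with rfl | hx'
      · simp [Real.zero_rpow hα.ne']
      · rw [show α = (α-1)+1 by ring, Real.rpow_add_one hx'.ne', show α-1+1-1 = α-1 by ring]
        ring
    unfold gammaPDFReal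
    rw [if_pos hx, Real.Gamma_add_one hα.ne', Real.rpow_add_one hβ.ne',
      show α+1-1 = α by ring, ← hxx]
    have h1 : Real.Gamma α ≠ 0 := (Real.Gamma_pos_of_pos hα).ne'
    field_simp

lemma lint_abs_moment (hα : 0 < α) (hβ : 0 < β) :
    ∫⁻ x, ENNReal.ofReal (|x| * gammaPDFReal α β x) = ENNReal.ofReal (α/β) := by
  calc ∫⁻ x, ENNReal.ofReal (|x| * gammaPDFReal α β x)
      = ∫⁻ x, ENNReal.ofReal (α/β) * gammaPDF (α+1) β x :=
        lintegral_congr fun x => moment_rw hα hβ x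
    _ = ENNReal.ofReal (α/β) * ∫⁻ x, gammaPDF (α+1) β x :=
        lintegral_const_mul' _ _ ENNReal.ofReal_ne_top
    _ = ENNReal.ofReal (α/β) := by
        rw [lintegral_gammaPDF_eq_one (by linarith) hβ, mul_one]

lemma integrable_gamma_id (hα : 0 < α) (hβ : 0 < β) :
    Integrable id (gammaMeasure α β) := by
  refine ⟨measurable_id.aestronglyMeasurable, ?_⟩
  rw [hasFiniteIntegral_iff_norm, gammaMeasure]
  simp only [id_eq]
  rw [ lintegral_withDensity_eq_lintegral_mul _
      (show Measurable (gammaPDF α β) from (measurable_gammaPDFReal α β).ennreal_ofReal)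
      measurable_norm.ennreal_ofReal]
  have : ∫⁻ (a : ℝ), ((gammaPDF α β * fun x => ENNReal.ofReal ‖x‖) : ℝ → ℝ≥0∞) a
      = ENNReal.ofReal (α/β) := by
    rw [← lint_abs_moment hα hβ]
    refine lintegral_congr fun x => ?_
    simp only [Pi.mul_apply, id_eq, Real.norm_eq_abs, gammaPDF]
    rw [← ENNReal.ofReal_mul (gammaPDFReal_nonneg hα hβ x), mul_comm]
  rw [this]
  exact ENNReal.ofReal_lt_top

variable {α β : ℝ}


lemma tail_le_one (hα : 0 < α) (hβ : 0 < β) (hα1 : α ≤ 1) {t : ℝ} (ht : 0 < t) :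
    gammaMeasure α β (Ioi t) ≤ ENNReal.ofReal ((1/β) * gammaPDFReal α β t) := by
  rw [gammaMeasure, withDensity_apply _ measurableSet_Ioi]
  have hc : (0:ℝ) ≤ β^α/Real.Gamma α * t^(α-1) := by positivity
  calc ∫⁻ s in Ioi t, gammaPDF α β s
      ≤ ∫⁻ s in Ioi t, ENNReal.ofReal (β^α/Real.Gamma α * t^(α-1)) *
          ENNReal.ofReal (exp (-(β*s))) := by
        refine setLIntegral_mono' measurableSet_Ioi fun s hs => ?_
        have hts : t ≤ s := (le_of_lt hs)
        rw [gammaPDF_of_nonneg (le_trans ht.le hts), ← ENNReal.ofReal_mul hc]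
        apply ENNReal.ofReal_le_ofReal
        have h1 : s^(α-1) ≤ t^(α-1) :=
          Real.rpow_le_rpow_of_nonpos ht hts (by linarith)
        have h2 : (0:ℝ) ≤ exp (-(β*s)) := (exp_pos _).le
        have h3 : (0:ℝ) ≤ β^α/Real.Gamma α := by positivity
        exact mul_le_mul_of_nonneg_right (mul_le_mul_of_nonneg_left h1 h3) h2
    _ = ENNReal.ofReal (β^α/Real.Gamma α * t^(α-1)) *
          ∫⁻ s in Ioi t, ENNReal.ofReal (exp (-(β*s))) :=
        lintegral_const_mul' _ _ ENNReal.ofReal_ne_top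
    _ = ENNReal.ofReal ((1/β) * gammaPDFReal α β t) := by
        rw [lint_exp_Ioi hβ, ← ENNReal.ofReal_mul hc]
        congr 1
        unfold gammaPDFReal
        rw [if_pos ht.le]
        field_simp

lemma head_le (hβ : 0 < β) (hα1 : 1 ≤ α) {t : ℝ} (ht : 0 < t) :
    gammaMeasure α β (Iic t) ≤ ENNReal.ofReal (β^α/Real.Gamma α * t^(α-1) * t) := by
  rw [gammaMeasure, withDensity_apply _ measurableSet_Iic,
    lintegral_Iic_eq_lintegral_Iio_add_Icc _ ht.le, lintegral_gammaPDF_of_nonpos le_rfl,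
    zero_add]
  calc ∫⁻ s in Icc 0 t, gammaPDF α β s
      ≤ ∫⁻ _ in Icc (0:ℝ) t, ENNReal.ofReal (β^α/Real.Gamma α * t^(α-1)) := by
        refine setLIntegral_mono' measurableSet_Icc fun s hs => ?_
        rw [gammaPDF_of_nonneg hs.1]
        apply ENNReal.ofReal_le_ofReal
        have h1 : s^(α-1) ≤ t^(α-1) := Real.rpow_le_rpow hs.1 hs.2 (by linarith)
        have h2 : exp (-(β*s)) ≤ 1 := by
          rw [exp_le_one_iff]
          have h0 : (0:ℝ) ≤ β * s := mul_nonneg hβ.le hs.1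
          linarith
        have h3 : (0:ℝ) ≤ β^α/Real.Gamma α := by positivity
        have h6 : (0:ℝ) ≤ β^α/Real.Gamma α * t^(α-1) :=
          mul_nonneg h3 (Real.rpow_nonneg ht.le _)
        calc β^α/Real.Gamma α * s^(α-1) * exp (-(β*s))
            ≤ β^α/Real.Gamma α * t^(α-1) * 1 :=
              mul_le_mul (mul_le_mul_of_nonneg_left h1 h3) h2 (exp_pos _).le h6
          _ = β^α/Real.Gamma α * t^(α-1) := mul_one _
    _ = ENNReal.ofReal (β^α/Real.Gamma α * t^(α-1)) * volume (Icc (0:ℝ) t) := by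
        rw [setLIntegral_const]
    _ = ENNReal.ofReal (β^α/Real.Gamma α * t^(α-1) * t) := by
        rw [Real.volume_Icc, ← ENNReal.ofReal_mul (by positivity)]
        norm_num

lemma pow_split (hα1 : 1 ≤ α) {t u : ℝ} (ht : 0 < t) (hu : 0 ≤ u) :
    (t+u)^(α-1) ≤ (2:ℝ)^α * (t^(α-1) + u^(α-1)) := by
  have h1 : t + u ≤ 2 * max t u := by
    rcases max_cases t u with ⟨he, h⟩ | ⟨he, h⟩ <;> rw [he] <;> linarith
  have h2 : (t+u)^(α-1) ≤ (2 * max t u)^(α-1) :=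
    Real.rpow_le_rpow (by linarith) h1 (by linarith)
  have h3 : (2 * max t u)^(α-1) = (2:ℝ)^(α-1) * (max t u)^(α-1) :=
    Real.mul_rpow (by norm_num) (le_trans ht.le (le_max_left _ _))
  have h4 : (max t u)^(α-1) ≤ t^(α-1) + u^(α-1) := by
    rcases le_total t u with h | h
    · rw [max_eq_right h]
      have := Real.rpow_nonneg ht.le (α-1); linarith
    · rw [max_eq_left h]
      have := Real.rpow_nonneg hu (α-1); linarith
  have h5 : (2:ℝ)^(α-1) ≤ (2:ℝ)^α :=
    Real.rpow_le_rpow_of_exponent_le one_le_two (by linarith)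
  have h6 : (0:ℝ) ≤ (max t u)^(α-1) := Real.rpow_nonneg (le_trans ht.le (le_max_left _ _)) _
  have h7 : (0:ℝ) ≤ t^(α-1) + u^(α-1) := by
    have := Real.rpow_nonneg ht.le (α-1); have := Real.rpow_nonneg hu (α-1); linarith
  calc (t+u)^(α-1) ≤ (2:ℝ)^(α-1) * (max t u)^(α-1) := by rw [← h3]; exact h2
    _ ≤ (2:ℝ)^α * (t^(α-1) + u^(α-1)) :=
        mul_le_mul h5 h4 h6 (by positivity)

lemma tail_ge_one_s15 (hα : 0 < α) (hβ : 0 < β) (hα1 : 1 ≤ α) {t : ℝ} (ht : 0 < t) :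
    gammaMeasure α β (Ioi t)
      ≤ ENNReal.ofReal ((2:ℝ)^α * ((1/β) * gammaPDFReal α β t + exp (-(β*t)))) := by
  set c0 : ℝ := β^α/Real.Gamma α with hc0
  have hc0p : 0 < c0 := by rw [hc0]; positivity
  set c1 : ℝ := 2^α * c0 * t^(α-1) with hc1
  have hc1p : 0 ≤ c1 := by rw [hc1]; positivity
  set c2 : ℝ := 2^α * c0 * exp (-(β*t)) with hc2
  have hc2p : 0 ≤ c2 := by rw [hc2]; positivity
  set h : ℝ → ℝ≥0∞ := fun u => ENNReal.ofReal (u^(α-1) * exp (-(β*u))) with hh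
  have hmeas : Measurable h := by
    apply Measurable.ennreal_ofReal
    fun_prop
  rw [gammaMeasure, withDensity_apply _ measurableSet_Ioi]
  have key : ∀ s ∈ Ioi t, gammaPDF α β s ≤
      ENNReal.ofReal c1 * ENNReal.ofReal (exp (-(β*s))) + ENNReal.ofReal c2 * h (s - t) := by
    intro s hs
    have hts : t < s := hs
    have hs0 : 0 < s := ht.trans hts
    rw [gammaPDF_of_nonneg hs0.le, hh]
    rw [← ENNReal.ofReal_mul hc1p, ← ENNReal.ofReal_mul hc2p,
      ← ENNReal.ofReal_add (mul_nonneg hc1p (exp_pos _).le)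
        (mul_nonneg hc2p (mul_nonneg (Real.rpow_nonneg (by linarith) _) (exp_pos _).le))]
    apply ENNReal.ofReal_le_ofReal
    have hE : exp (-(β*t)) * exp (-(β*(s-t))) = exp (-(β*s)) := by
      rw [← Real.exp_add]; ring_nf
    have hkey : s^(α-1) ≤ (2:ℝ)^α * (t^(α-1) + (s-t)^(α-1)) := by
      have := pow_split hα1 ht (by linarith : (0:ℝ) ≤ s - t)
      rwa [show t + (s-t) = s by ring] at this
    have hEp : (0:ℝ) ≤ exp (-(β*s)) := (exp_pos _).le
    calc c0 * s^(α-1) * exp (-(β*s))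
        ≤ c0 * ((2:ℝ)^α * (t^(α-1) + (s-t)^(α-1))) * exp (-(β*s)) := by
          apply mul_le_mul_of_nonneg_right (mul_le_mul_of_nonneg_left hkey hc0p.le) hEp
      _ = c1 * exp (-(β*s)) + c2 * ((s-t)^(α-1) * exp (-(β*(s-t)))) := by
          rw [hc1, hc2, ← hE]; ring
  calc ∫⁻ s in Ioi t, gammaPDF α β s
      ≤ ∫⁻ s in Ioi t, (ENNReal.ofReal c1 * ENNReal.ofReal (exp (-(β*s)))
          + ENNReal.ofReal c2 * h (s - t)) := setLIntegral_mono' measurableSet_Ioi key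
    _ = ENNReal.ofReal c1 * (∫⁻ s in Ioi t, ENNReal.ofReal (exp (-(β*s))))
          + ENNReal.ofReal c2 * (∫⁻ s in Ioi t, h (s - t)) := by
        rw [lintegral_add_left]
        · rw [lintegral_const_mul' _ _ ENNReal.ofReal_ne_top,
            lintegral_const_mul' _ _ ENNReal.ofReal_ne_top]
        · exact (measurable_exp.comp ((measurable_id.const_mul β).neg)).ennreal_ofReal.const_mul _
    _ = ENNReal.ofReal c1 * ENNReal.ofReal (exp (-(β*t))/β)
          + ENNReal.ofReal c2 * ∫⁻ u in Ioi (0:ℝ), h u := by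
        rw [lint_exp_Ioi hβ, lint_shift h t]
    _ = ENNReal.ofReal (c1 * (exp (-(β*t))/β)) + ENNReal.ofReal ((2:ℝ)^α * exp (-(β*t))) := by
        rw [← ENNReal.ofReal_mul hc1p]
        congr 1
        have : ENNReal.ofReal c2 = ENNReal.ofReal ((2:ℝ)^α * exp (-(β*t))) * ENNReal.ofReal c0 := by
          rw [← ENNReal.ofReal_mul (by positivity), hc2]; ring_nf
        rw [this, mul_assoc, hh, base_I hα hβ, mul_one]
    _ = ENNReal.ofReal ((2:ℝ)^α * ((1/β) * gammaPDFReal α β t + exp (-(β*t)))) := by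
        rw [← ENNReal.ofReal_add (by positivity) (by positivity)]
        congr 1
        unfold gammaPDFReal
        rw [if_pos ht.le, hc1, hc0]
        field_simp

lemma two_mul_half : (2:ℝ≥0∞) * (1/2) = 1 := by
  rw [one_div, ENNReal.mul_inv_cancel] <;> norm_num


variable {α β : ℝ}

lemma median_exists (hα : 0 < α) (hβ : 0 < β) :
    ∃ m : ℝ, (∀ t, t < m → 1 ≤ 2 * gammaMeasure α β (Ioi t)) ∧
             (∀ t, m < t → 1 ≤ 2 * gammaMeasure α β (Iic t)) := by
  set ν := gammaMeasure α β with hν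
  have : IsProbabilityMeasure ν := isProbabilityMeasure_gammaMeasure hα hβ
  have h0Q : ν (Iic 0) ≤ 1/2 := by
    rw [hν, gamma_Iic_zero]; exact zero_le
  set Q := {t : ℝ | ν (Iic t) ≤ 1/2} with hQ
  have hQne : (0:ℝ) ∈ Q := h0Q
  obtain ⟨t0, ht0⟩ : ∃ t0 : ℝ, 1/2 < ν (Iic t0) := by
    have htend := tendsto_measure_Iic_atTop ν
    rw [measure_univ] at htend
    have := htend.eventually_const_lt (show (1:ℝ≥0∞)/2 < 1 by norm_num)
    exact this.exists
  have hbdd : BddAbove Q := by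
    refine ⟨t0, fun s hs => ?_⟩
    by_contra hc
    push_neg at hc
    exact absurd (le_trans (measure_mono (Iic_subset_Iic.2 hc.le)) hs) (not_le.2 ht0)
  refine ⟨sSup Q, fun t ht => ?_, fun t ht => ?_⟩
  · obtain ⟨s, hsQ, hts⟩ := exists_lt_of_lt_csSup ⟨0, hQne⟩ ht
    have hsum : ν (Iic s) + ν (Ioi s) = 1 := by
      rw [← compl_Iic]
      rw [measure_add_measure_compl measurableSet_Iic, measure_univ]
    have h1 : (1:ℝ≥0∞) ≤ 1/2 + ν (Ioi t) := by
      calc (1:ℝ≥0∞) = ν (Iic s) + ν (Ioi s) := hsum.symm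
        _ ≤ 1/2 + ν (Ioi t) := add_le_add hsQ (measure_mono (Ioi_subset_Ioi hts.le))
    have h2 : (1:ℝ≥0∞)/2 ≤ ν (Ioi t) :=
      (ENNReal.add_le_add_iff_left (show (1:ℝ≥0∞)/2 ≠ ⊤ by norm_num)).mp
        (le_trans (ENNReal.add_halves 1).le h1)
    calc (1:ℝ≥0∞) = 2 * (1/2) := two_mul_half.symm
      _ ≤ 2 * ν (Ioi t) := mul_le_mul_right h2 2
  · have htQ : t ∉ Q := fun h => absurd (le_csSup hbdd h) (not_le.2 ht)
    have h2 : (1:ℝ≥0∞)/2 ≤ ν (Iic t) := le_of_not_ge htQ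
    calc (1:ℝ≥0∞) = 2 * (1/2) := two_mul_half.symm
      _ ≤ 2 * ν (Iic t) := mul_le_mul_right h2 2

variable {α β : ℝ}


lemma exists_C (hα : 0 < α) (hβ : 0 < β) :
    ∃ C : ℝ, 0 ≤ C ∧ ∀ t : ℝ, 0 < t →
      gammaMeasure α β (Iic t) * gammaMeasure α β (Ioi t)
        ≤ ENNReal.ofReal (C * ((1+t) * gammaPDFReal α β t)) := by
  have : IsProbabilityMeasure (gammaMeasure α β) := isProbabilityMeasure_gammaMeasure hα hβ
  set C : ℝ := max (1/β) (max (exp β) ((2:ℝ)^α * (1/β + Real.Gamma α/β^α))) with hC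
  have hC0 : 0 ≤ C := le_trans (by positivity) (le_max_left _ _)
  refine ⟨C, hC0, fun t ht => ?_⟩
  have hf0 : 0 ≤ gammaPDFReal α β t := gammaPDFReal_nonneg hα hβ t
  have h1t : (0:ℝ) ≤ 1 + t := by linarith
  rcases le_total α 1 with hα1 | hα1
  · -- α ≤ 1 : use tail
    calc gammaMeasure α β (Iic t) * gammaMeasure α β (Ioi t)
        ≤ 1 * gammaMeasure α β (Ioi t) := mul_le_mul_left prob_le_one _
      _ = gammaMeasure α β (Ioi t) := one_mul _
      _ ≤ ENNReal.ofReal ((1/β) * gammaPDFReal α β t) := tail_le_one hα hβ hα1 ht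
      _ ≤ ENNReal.ofReal (C * ((1+t) * gammaPDFReal α β t)) := by
          apply ENNReal.ofReal_le_ofReal
          have h2 : (1/β) * gammaPDFReal α β t ≤ (1/β) * ((1+t) * gammaPDFReal α β t) := by
            apply mul_le_mul_of_nonneg_left _ (by positivity)
            nlinarith
          refine le_trans h2 (mul_le_mul_of_nonneg_right (le_max_left _ _) (by positivity))
  · rcases le_total t 1 with ht1 | ht1
    · -- α ≥ 1, t ≤ 1 : use head
      calc gammaMeasure α β (Iic t) * gammaMeasure α β (Ioi t)
          ≤ gammaMeasure α β (Iic t) * 1 := mul_le_mul_right prob_le_one _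
        _ = gammaMeasure α β (Iic t) := mul_one _
        _ ≤ ENNReal.ofReal (β^α/Real.Gamma α * t^(α-1) * t) := head_le hβ hα1 ht
        _ ≤ ENNReal.ofReal (C * ((1+t) * gammaPDFReal α β t)) := by
            apply ENNReal.ofReal_le_ofReal
            have hCe : exp β ≤ C := le_trans (le_max_left _ _) (le_max_right _ _)
            have hbt : (1:ℝ) ≤ exp β * exp (-(β*t)) := by
              rw [← Real.exp_add]
              have h0 : (0:ℝ) ≤ β + -(β*t) := by nlinarith
              calc (1:ℝ) = exp 0 := exp_zero.symm
                _ ≤ _ := exp_le_exp.2 h0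
            have key : t ≤ C * ((1+t) * exp (-(β*t))) := by
              have e1 : (1+t) ≤ (1+t) * (exp β * exp (-(β*t))) :=
                le_mul_of_one_le_right h1t hbt
              have e2 : (1+t) * (exp β * exp (-(β*t))) = exp β * ((1+t) * exp (-(β*t))) := by
                ring
              have e3 : exp β * ((1+t) * exp (-(β*t))) ≤ C * ((1+t) * exp (-(β*t))) :=
                mul_le_mul_of_nonneg_right hCe (by positivity)
              linarith
            unfold gammaPDFReal
            rw [if_pos ht.le]
            calc β^α/Real.Gamma α * t^(α-1) * t
                ≤ β^α/Real.Gamma α * t^(α-1) * (C * ((1+t) * exp (-(β*t)))) := by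
                  apply mul_le_mul_of_nonneg_left key (by positivity)
              _ = C * ((1+t) * (β^α/Real.Gamma α * t^(α-1) * exp (-(β*t)))) := by ring
    · -- α ≥ 1, t ≥ 1 : use tail
      calc gammaMeasure α β (Iic t) * gammaMeasure α β (Ioi t)
          ≤ 1 * gammaMeasure α β (Ioi t) := mul_le_mul_left prob_le_one _
        _ = gammaMeasure α β (Ioi t) := one_mul _
        _ ≤ ENNReal.ofReal ((2:ℝ)^α * ((1/β) * gammaPDFReal α β t + exp (-(β*t)))) :=
            tail_ge_one_s15 hα hβ hα1 ht
        _ ≤ ENNReal.ofReal (C * ((1+t) * gammaPDFReal α β t)) := by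
            apply ENNReal.ofReal_le_ofReal
            have hCe : (2:ℝ)^α * (1/β + Real.Gamma α/β^α) ≤ C :=
              le_trans (le_max_right _ _) (le_max_right _ _)
            have hrp : (1:ℝ) ≤ t^(α-1) := by
              calc (1:ℝ) = t^(0:ℝ) := (Real.rpow_zero t).symm
                _ ≤ t^(α-1) := Real.rpow_le_rpow_of_exponent_le ht1 (by linarith)
            have hgam : Real.Gamma α / β^α * gammaPDFReal α β t = t^(α-1) * exp (-(β*t)) := by
              unfold gammaPDFReal
              rw [if_pos ht.le]
              have h1 : Real.Gamma α ≠ 0 := (Real.Gamma_pos_of_pos hα).ne'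
              have h2 : β^α ≠ 0 := (Real.rpow_pos_of_pos hβ α).ne'
              field_simp
            have hexp : exp (-(β*t)) ≤ (1+t) * (Real.Gamma α / β^α * gammaPDFReal α β t) := by
              rw [hgam]
              have h2 : (0:ℝ) < exp (-(β*t)) := exp_pos _
              have e1 : exp (-(β*t)) ≤ t^(α-1) * exp (-(β*t)) :=
                le_mul_of_one_le_left h2.le hrp
              have e2 : t^(α-1) * exp (-(β*t)) ≤ (1+t) * (t^(α-1) * exp (-(β*t))) :=
                le_mul_of_one_le_left (by positivity) (by linarith)
              linarith
            have hfirst : (1/β) * gammaPDFReal α β t ≤ (1+t) * ((1/β) * gammaPDFReal α β t) :=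
              le_mul_of_one_le_left (by positivity) (by linarith)
            calc (2:ℝ)^α * ((1/β) * gammaPDFReal α β t + exp (-(β*t)))
                ≤ (2:ℝ)^α * ((1+t) * ((1/β) * gammaPDFReal α β t)
                    + (1+t) * (Real.Gamma α / β^α * gammaPDFReal α β t)) := by
                  apply mul_le_mul_of_nonneg_left _ (by positivity)
                  linarith
              _ = ((2:ℝ)^α * (1/β + Real.Gamma α/β^α)) * ((1+t) * gammaPDFReal α β t) := by
                  ring
              _ ≤ C * ((1+t) * gammaPDFReal α β t) := by
                  apply mul_le_mul_of_nonneg_right hCe (by positivity)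

lemma main_core
    {α β : ℝ} (hα : 0 < α) (hβ : 0 < β)
    {Ω : Type*} [MeasurableSpace Ω] (P : Measure Ω) [IsProbabilityMeasure P]
    (X : Ω → ℝ) (hX : Measurable X) (hdist : P.map X = gammaMeasure α β)
    (C : ℝ) (hC0 : 0 ≤ C)
    (hCb : ∀ t : ℝ, 0 < t → gammaMeasure α β (Iic t) * gammaMeasure α β (Ioi t)
        ≤ ENNReal.ofReal (C * ((1+t) * gammaPDFReal α β t)))
    (m : ℝ)
    (hm1 : ∀ t, t < m → 1 ≤ 2 * gammaMeasure α β (Ioi t))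
    (hm2 : ∀ t, m < t → 1 ≤ 2 * gammaMeasure α β (Iic t))
    (S : Set ℝ) (hSm : MeasurableSet S) (hSpos : ∀ t ∈ S, 0 < t)
    (g : ℝ → ℝ) (hgm : Measurable g) (K : ℝ) (hgK : ∀ x, |g x| ≤ K + |x|)
    (hkey : ∀ x, ENNReal.ofReal |g x - g m| ≤ volume (S ∩ Ioo (min x m) (max x m))) :
    ∫ ω, |g (X ω) - ∫ ω', g (X ω') ∂P| ∂P
      ≤ (4*C) * ∫ ω, Set.indicator (X ⁻¹' S) (fun ω' => 1 + X ω') ω ∂P := by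
  set ν := gammaMeasure α β with hν
  haveI hprob : IsProbabilityMeasure ν := isProbabilityMeasure_gammaMeasure hα hβ
  -- integrability
  have hXint : Integrable X P := by
    have h1 : Integrable id (P.map X) := hdist ▸ integrable_gamma_id hα hβ
    exact (integrable_map_measure measurable_id.aestronglyMeasurable hX.aemeasurable).mp h1
  have hTint : Integrable (fun ω => g (X ω)) P := by
    refine Integrable.mono' ((integrable_const K).add hXint.abs)
      ((hgm.comp hX).aestronglyMeasurable) (ae_of_all _ fun ω => ?_)
    simpa using hgK (X ω)
  set E := ∫ ω', g (X ω') ∂P with hE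
  set I₁ := ∫ ω, |g (X ω) - g m| ∂P with hI₁def
  have hIsub : Integrable (fun ω => g (X ω) - g m) P := hTint.sub (integrable_const _)
  have hsub_eq : ∫ ω, (g (X ω) - g m) ∂P = E - g m := by
    rw [integral_sub hTint (integrable_const _), integral_const, probReal_univ]
    simp
    rfl
  have hme : |E - g m| ≤ I₁ := by
    rw [← hsub_eq, hI₁def]
    simpa [Real.norm_eq_abs] using
      norm_integral_le_integral_norm (μ := P) (fun ω => g (X ω) - g m)
  have step1 : ∫ ω, |g (X ω) - E| ∂P ≤ 2 * I₁ := by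
    have hpt : ∀ ω, |g (X ω) - E| ≤ |g (X ω) - g m| + |E - g m| := fun ω => by
      have h := abs_sub_le (g (X ω)) (g m) E
      rw [abs_sub_comm (g m) E] at h
      exact h
    calc ∫ ω, |g (X ω) - E| ∂P
        ≤ ∫ ω, (|g (X ω) - g m| + |E - g m|) ∂P := by
          refine integral_mono ((hTint.sub (integrable_const E)).abs)
            (hIsub.abs.add (integrable_const _)) hpt
      _ = I₁ + |E - g m| := by
          rw [integral_add hIsub.abs (integrable_const _), integral_const, probReal_univ]
          simp
          rfl
      _ ≤ I₁ + I₁ := add_le_add_right hme _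
      _ = 2 * I₁ := by ring
  -- to lintegral over ν
  have habs_meas : Measurable fun x => |g x - g m| := (hgm.sub measurable_const).abs
  have hI₁' : I₁ = (∫⁻ x, ENNReal.ofReal |g x - g m| ∂ν).toReal := by
    rw [hI₁def, ← hdist, lintegral_map habs_meas.ennreal_ofReal hX,
      integral_eq_lintegral_of_nonneg_ae (ae_of_all _ fun ω => abs_nonneg _)
        ((habs_meas.comp hX).aestronglyMeasurable)]
  -- product set
  set V : Set (ℝ × ℝ) := {p : ℝ × ℝ | p.2 ∈ S} ∩ ({p : ℝ × ℝ | min p.1 m < p.2}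
      ∩ {p : ℝ × ℝ | p.2 < max p.1 m}) with hV
  have hVm : MeasurableSet V := by
    refine ((measurable_snd hSm).inter (MeasurableSet.inter ?_ ?_))
    · exact measurableSet_lt (measurable_fst.min measurable_const) measurable_snd
    · exact measurableSet_lt measurable_snd (measurable_fst.max measurable_const)
  have hsec : ∀ x : ℝ, (Prod.mk x ⁻¹' V) = S ∩ Ioo (min x m) (max x m) := by
    intro x
    ext t
    simp [hV, mem_Ioo, and_assoc]
  have main_lint : ∫⁻ x, ENNReal.ofReal |g x - g m| ∂ν ≤ (ν.prod volume) V := by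
    calc ∫⁻ x, ENNReal.ofReal |g x - g m| ∂ν
        ≤ ∫⁻ x, volume (S ∩ Ioo (min x m) (max x m)) ∂ν := lintegral_mono hkey
      _ = ∫⁻ x, volume (Prod.mk x ⁻¹' V) ∂ν := lintegral_congr fun x => by rw [hsec x]
      _ = (ν.prod volume) V := (Measure.prod_apply hVm).symm
  have swap : (ν.prod volume) V = ∫⁻ t, ν {x | (x, t) ∈ V} ∂volume :=
    Measure.prod_apply_symm hVm
  set W : ℝ → Set ℝ := fun t => {x | min x m < t ∧ t < max x m} with hW
  have swap2 : ∫⁻ t, ν {x | (x, t) ∈ V} ∂volume = ∫⁻ t in S, ν (W t) ∂volume := by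
    rw [← lintegral_indicator hSm]
    refine lintegral_congr fun t => ?_
    by_cases htS : t ∈ S
    · rw [Set.indicator_of_mem htS]
      congr 1
      ext x
      simp [hV, hW, htS]
    · rw [Set.indicator_of_notMem htS]
      have : {x : ℝ | (x, t) ∈ V} = ∅ := by
        ext x; simp [hV, htS]
      rw [this, measure_empty]
  -- pointwise bound on S
  have hWb : ∀ t ∈ S, ν (W t) ≤ 2 * ENNReal.ofReal (C * ((1+t) * gammaPDFReal α β t)) := by
    intro t htS
    have htpos := hSpos t htS
    rcases lt_trichotomy t m with htm | htm | htm
    · have hWt : W t = Iio t := by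
        ext x
        simp only [hW, mem_setOf_eq, mem_Iio, min_lt_iff, lt_max_iff]
        constructor
        · rintro ⟨h1 | h1, _⟩
          · exact h1
          · linarith
        · intro h; exact ⟨Or.inl h, Or.inr htm⟩
      calc ν (W t) = ν (Iio t) := by rw [hWt]
        _ ≤ ν (Iic t) := measure_mono Iio_subset_Iic_self
        _ = 1 * ν (Iic t) := (one_mul _).symm
        _ ≤ (2 * ν (Ioi t)) * ν (Iic t) := mul_le_mul_left (hm1 t htm) _
        _ = 2 * (ν (Iic t) * ν (Ioi t)) := by ring
        _ ≤ 2 * ENNReal.ofReal (C * ((1+t) * gammaPDFReal α β t)) :=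
            mul_le_mul_right (hCb t htpos) 2
    · have hWt : W t = ∅ := by
        subst htm
        ext x
        simp only [hW, mem_setOf_eq, mem_empty_iff_false, iff_false, not_and, min_lt_iff,
          lt_max_iff]
        rintro (h1 | h1) <;> rintro (h2 | h2) <;> linarith
      rw [hWt, measure_empty]
      exact zero_le
    · have hWt : W t = Ioi t := by
        ext x
        simp only [hW, mem_setOf_eq, mem_Ioi, min_lt_iff, lt_max_iff]
        constructor
        · rintro ⟨_, h2 | h2⟩
          · exact h2
          · linarith
        · intro h; exact ⟨Or.inr htm, Or.inl h⟩
      calc ν (W t) = ν (Ioi t) := by rw [hWt]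
        _ = 1 * ν (Ioi t) := (one_mul _).symm
        _ ≤ (2 * ν (Iic t)) * ν (Ioi t) := mul_le_mul_left (hm2 t htm) _
        _ = 2 * (ν (Iic t) * ν (Ioi t)) := by ring
        _ ≤ 2 * ENNReal.ofReal (C * ((1+t) * gammaPDFReal α β t)) :=
            mul_le_mul_right (hCb t htpos) 2
  set L := ∫⁻ t in S, ENNReal.ofReal ((1+t) * gammaPDFReal α β t) ∂volume with hL
  have hstep : ∫⁻ t in S, ν (W t) ∂volume ≤ 2 * ENNReal.ofReal C * L := by
    calc ∫⁻ t in S, ν (W t) ∂volume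
        ≤ ∫⁻ t in S, 2 * ENNReal.ofReal (C * ((1+t) * gammaPDFReal α β t)) ∂volume :=
          setLIntegral_mono' hSm hWb
      _ = ∫⁻ t in S, (2 * ENNReal.ofReal C) * ENNReal.ofReal ((1+t) * gammaPDFReal α β t)
            ∂volume := by
          refine lintegral_congr fun t => ?_
          rw [ENNReal.ofReal_mul hC0, mul_assoc]
      _ = 2 * ENNReal.ofReal C * L := by
          rw [hL, lintegral_const_mul' _ _ (ENNReal.mul_ne_top (by norm_num)
            ENNReal.ofReal_ne_top)]
  have hLtop : L ≠ ⊤ := by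
    have hbound : L ≤ 1 + ENNReal.ofReal (α/β) := by
      calc L ≤ ∫⁻ t, ENNReal.ofReal ((1+t) * gammaPDFReal α β t) ∂volume :=
            setLIntegral_le_lintegral _ _
        _ ≤ ∫⁻ t, (ENNReal.ofReal (gammaPDFReal α β t)
              + ENNReal.ofReal (|t| * gammaPDFReal α β t)) ∂volume := by
            refine lintegral_mono fun t => ?_
            have h1 : (1+t) * gammaPDFReal α β t
                = gammaPDFReal α β t + t * gammaPDFReal α β t := by ring
            rw [h1]
            refine le_trans ENNReal.ofReal_add_le (add_le_add_right ?_ _)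
            exact ENNReal.ofReal_le_ofReal (mul_le_mul_of_nonneg_right (le_abs_self t)
              (gammaPDFReal_nonneg hα hβ t))
        _ = 1 + ENNReal.ofReal (α/β) := by
            rw [lintegral_add_left (measurable_gammaPDFReal α β).ennreal_ofReal,
              lint_abs_moment hα hβ]
            congr 1
            exact lintegral_gammaPDF_eq_one hα hβ
    exact ne_top_of_le_ne_top (by simp [ENNReal.add_ne_top]) hbound
  -- RHS identification
  have hRHS : ∫ ω, Set.indicator (X ⁻¹' S) (fun ω' => 1 + X ω') ω ∂P = L.toReal := by
    have hind_meas : Measurable fun x : ℝ => Set.indicator S (fun t => 1 + t) x :=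
      (measurable_const.add measurable_id).indicator hSm
    have h1 : ∀ ω, Set.indicator (X ⁻¹' S) (fun ω' => 1 + X ω') ω
        = Set.indicator S (fun t => 1 + t) (X ω) := by
      intro ω
      by_cases h : X ω ∈ S <;> simp [Set.indicator, h]
    calc ∫ ω, Set.indicator (X ⁻¹' S) (fun ω' => 1 + X ω') ω ∂P
        = ∫ ω, Set.indicator S (fun t => 1 + t) (X ω) ∂P := by
          exact integral_congr_ae (ae_of_all _ h1)
      _ = ∫ x, Set.indicator S (fun t => 1 + t) x ∂ν := by
          rw [← hdist, integral_map hX.aemeasurable hind_meas.aestronglyMeasurable]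
      _ = (∫⁻ x, ENNReal.ofReal (Set.indicator S (fun t => 1 + t) x) ∂ν).toReal := by
          refine integral_eq_lintegral_of_nonneg_ae (ae_of_all _ fun x => ?_)
            hind_meas.aestronglyMeasurable
          by_cases h : x ∈ S
          · have := hSpos x h
            simp only [Pi.zero_apply, Set.indicator_of_mem h]
            linarith
          · simp [Pi.zero_apply, Set.indicator_of_notMem h]
      _ = (∫⁻ x in S, ENNReal.ofReal (1 + x) ∂ν).toReal := by
          congr 1
          rw [← lintegral_indicator hSm]
          refine lintegral_congr fun x => ?_
          by_cases h : x ∈ S <;> simp [h]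
      _ = L.toReal := by
          congr 1
          rw [hL, hν, gammaMeasure, restrict_withDensity hSm,
            lintegral_withDensity_eq_lintegral_mul _
              (show Measurable (gammaPDF α β) from (measurable_gammaPDFReal α β).ennreal_ofReal)
              (show Measurable fun x : ℝ => ENNReal.ofReal (1 + x) from
                (measurable_const.add measurable_id).ennreal_ofReal)]
          refine setLIntegral_congr_fun hSm (fun t htS => ?_)
          simp only [Pi.mul_apply, gammaPDF]
          rw [← ENNReal.ofReal_mul (gammaPDFReal_nonneg hα hβ t), mul_comm]
  -- final chain
  have h2top : (2 : ℝ≥0∞) * ENNReal.ofReal C * L ≠ ⊤ :=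
    ENNReal.mul_ne_top (ENNReal.mul_ne_top (by norm_num) ENNReal.ofReal_ne_top) hLtop
  calc ∫ ω, |g (X ω) - E| ∂P ≤ 2 * I₁ := step1
    _ = 2 * (∫⁻ x, ENNReal.ofReal |g x - g m| ∂ν).toReal := by rw [hI₁']
    _ ≤ 2 * ((2 * ENNReal.ofReal C * L).toReal) := by
        refine mul_le_mul_of_nonneg_left ?_ (by norm_num)
        refine ENNReal.toReal_mono h2top ?_
        exact le_trans main_lint (le_trans (le_of_eq swap) (le_trans (le_of_eq swap2) hstep))
    _ = (4*C) * L.toReal := by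
        rw [ENNReal.toReal_mul, ENNReal.toReal_mul, ENNReal.toReal_ofReal hC0]
        norm_num
        ring
    _ = (4*C) * ∫ ω, Set.indicator (X ⁻¹' S) (fun ω' => 1 + X ω') ω ∂P := by rw [hRHS]


lemma ofReal_max_zero (r : ℝ) : ENNReal.ofReal (max r 0) = ENNReal.ofReal r := by
  rcases le_total r 0 with h | h
  · rw [max_eq_right h, ENNReal.ofReal_of_nonpos h, ENNReal.ofReal_zero]
  · rw [max_eq_left h]

theorem gamma_truncation_L1_concentration
    (α β : ℝ) (hα : 0 < α) (hβ : 0 < β)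
    {Ω : Type*} [MeasurableSpace Ω] (P : Measure Ω) [IsProbabilityMeasure P]
    (X : Ω → ℝ) (hX : Measurable X)
    (hdist : P.map X = gammaMeasure α β) :
    ∃ c : ℝ, ∀ a b : EReal, 0 ≤ a → a < b →
      ∫ ω, |truncE (X ω) a b - ∫ ω', truncE (X ω') a b ∂P| ∂P
        ≤ c * ∫ ω, Set.indicator {ω' | a < (X ω' : EReal) ∧ (X ω' : EReal) < b}
            (fun ω' => 1 + X ω') ω ∂P := by
  obtain ⟨C, hC0, hCb⟩ := exists_C hα hβ
  obtain ⟨m, hm1, hm2⟩ := median_exists hα hβ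
  refine ⟨4*C, fun a b ha0 hab => ?_⟩
  have haT : a ≠ ⊤ := (hab.trans_le le_top).ne
  have haB : a ≠ ⊥ := (lt_of_lt_of_le EReal.bot_lt_zero ha0).ne'
  set A := a.toReal with hA
  have haA : (A : EReal) = a := EReal.coe_toReal haT haB
  have hA0 : 0 ≤ A := by
    rw [← EReal.coe_le_coe_iff (x := (0:ℝ)) (y := A), haA]
    exact_mod_cast ha0
  set S := {t : ℝ | a < (t : EReal) ∧ (t : EReal) < b} with hSdef
  have hpre : {ω' | a < (X ω' : EReal) ∧ (X ω' : EReal) < b} = X ⁻¹' S := rfl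
  have hSpos : ∀ t ∈ S, 0 < t := by
    intro t ht
    have h0t : ((0:ℝ) : EReal) < (t : EReal) := by
      refine lt_of_le_of_lt ?_ ht.1
      exact_mod_cast ha0
    exact_mod_cast h0t
  rcases eq_or_ne b ⊤ with rfl | hbT
  · -- b = ⊤
    have hSeq : S = Ioi A := by
      ext t
      simp only [hSdef, mem_setOf_eq, mem_Ioi, ← haA, EReal.coe_lt_coe_iff]
      exact and_iff_left (EReal.coe_lt_top t)
    have hg : ∀ x, truncE x a ⊤ = max x A := fun x => by
      rw [← haA]; exact truncE_top x A
    have hgfun : (fun x => truncE x a ⊤) = fun x => max x A := funext hg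
    have hgm : Measurable fun x => truncE x a ⊤ := by
      rw [hgfun]; exact measurable_id.max measurable_const
    have hSm : MeasurableSet S := hSeq ▸ measurableSet_Ioi
    have hgK : ∀ x, |truncE x a ⊤| ≤ |A| + |x| := by
      intro x
      rw [hg]
      refine le_trans abs_max_le_max_abs_abs (max_le ?_ ?_)
      · have := abs_nonneg A; linarith
      · have := abs_nonneg x; linarith
    have hkey : ∀ x, ENNReal.ofReal |truncE x a ⊤ - truncE m a ⊤|
        ≤ volume (S ∩ Ioo (min x m) (max x m)) := by
      intro x
      rw [hg, hg, hSeq, Ioi_inter_Ioo, Real.volume_Ioo]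
      refine le_trans (ENNReal.ofReal_le_ofReal (T1real A x m)) (le_of_eq ?_)
      exact ofReal_max_zero _
    have := main_core hα hβ P X hX hdist C hC0 hCb m hm1 hm2 S hSm hSpos _ hgm (|A|) hgK hkey
    rw [hpre]
    exact this
  · -- b real
    have hbB : b ≠ ⊥ := by
      intro h
      rw [h] at hab
      exact not_lt_bot hab
    set B := b.toReal with hB
    have hbB' : (B : EReal) = b := EReal.coe_toReal hbT hbB
    have hSeq : S = Ioo A B := by
      ext t
      simp only [hSdef, mem_setOf_eq, mem_Ioo, ← haA, ← hbB', EReal.coe_lt_coe_iff]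
    have hg : ∀ x, truncE x a b = min (max x A) B := fun x => by
      rw [← haA, ← hbB']; exact truncE_coe x A B
    have hgfun : (fun x => truncE x a b) = fun x => min (max x A) B := funext hg
    have hgm : Measurable fun x => truncE x a b := by
      rw [hgfun]; exact (measurable_id.max measurable_const).min measurable_const
    have hSm : MeasurableSet S := hSeq ▸ measurableSet_Ioo
    have hgK : ∀ x, |truncE x a b| ≤ (|A| + |B|) + |x| := by
      intro x
      rw [hg]
      have hB0 := abs_nonneg B
      have hA0' := abs_nonneg A
      have hx0 := abs_nonneg x
      rcases le_total (max x A) B with h | h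
      · rw [min_eq_left h]
        refine le_trans abs_max_le_max_abs_abs (max_le (by linarith) (by linarith))
      · rw [min_eq_right h]
        linarith [le_abs_self B]
    have hkey : ∀ x, ENNReal.ofReal |truncE x a b - truncE m a b|
        ≤ volume (S ∩ Ioo (min x m) (max x m)) := by
      intro x
      rw [hg, hg, hSeq, Ioo_inter_Ioo, Real.volume_Ioo]
      refine le_trans (ENNReal.ofReal_le_ofReal (T2real A B x m)) (le_of_eq ?_)
      exact ofReal_max_zero _
    have := main_core hα hβ P X hX hdist C hC0 hCb m hm1 hm2 S hSm hSpos _ hgm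
      (|A| + |B|) hgK hkey
    rw [hpre]
    exact this
end
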